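/- arXiv:math/0306166 — 2 statements merged into one kernel-verified Lean document; each statement's English description precedes it below -/
import Mathlib

section
/- Let P be an induced-hereditary graph property that is not the class of all graphs, and let 𝒢 be a generating set for P. Then dec_P(𝒢) ≤ dec_P(S(P)) = dec(P), and if moreover 𝒢 ⊆ S(P) then dec_P(𝒢) = dec_P(S(P)). -/
/-!  Common framework: finite simple graphs on finite subsets of `ℕ`,
graph properties, `(P₁,…,Pₙ)`-partitions, products of properties,
`P`-decompositions, strict graphs, decomposability numbers, generating
sets, *-joins of copies, and the respecting notions from the paper. -/

/-- A finite simple graph on a finite vertex set of natural numbers. -/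
structure NatGraph where
  verts : Finset ℕ
  Adj : ℕ → ℕ → Prop
  symm : ∀ a b, Adj a b → Adj b a
  loopless : ∀ a, ¬Adj a a
  mem_of_adj : ∀ a b, Adj a b → a ∈ verts ∧ b ∈ verts

/-- The null graph `K₀` (no vertices). -/
def nullGraph : NatGraph where
  verts := ∅
  Adj _ _ := False
  symm _ _ h := h.elim
  loopless _ h := h
  mem_of_adj _ _ h := h.elim

namespace NatGraph

/-- The subgraph of `G` induced by the vertex set `U`. -/
def induce (G : NatGraph) (U : Finset ℕ) : NatGraph where
  verts := G.verts ∩ U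
  Adj a b := G.Adj a b ∧ a ∈ U ∧ b ∈ U
  symm a b h := ⟨G.symm a b h.1, h.2.2, h.2.1⟩
  loopless a h := G.loopless a h.1
  mem_of_adj a b h := ⟨Finset.mem_inter.2 ⟨(G.mem_of_adj a b h.1).1, h.2.1⟩,
    Finset.mem_inter.2 ⟨(G.mem_of_adj a b h.1).2, h.2.2⟩⟩

/-- `φ` is an isomorphism from `G` onto `H`. -/
def IsoVia (G H : NatGraph) (φ : ℕ → ℕ) : Prop :=
  Set.BijOn φ (G.verts : Set ℕ) (H.verts : Set ℕ) ∧
    ∀ a ∈ G.verts, ∀ b ∈ G.verts, (G.Adj a b ↔ H.Adj (φ a) (φ b))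

/-- `G` and `H` are isomorphic. -/
def Iso (G H : NatGraph) : Prop := ∃ φ, G.IsoVia H φ

/-- `H ≤ G` : `H` is isomorphic to an induced subgraph of `G`. -/
def Le (H G : NatGraph) : Prop := ∃ U ⊆ G.verts, H.Iso (G.induce U)

end NatGraph

/-- `K` is the disjoint union of the family `C` of graphs. -/
def IsDisjUnion {k : ℕ} (K : NatGraph) (C : Fin k → NatGraph) : Prop :=
  (∀ i j, i ≠ j → Disjoint (C i).verts (C j).verts) ∧
  K.verts = Finset.univ.biUnion (fun j => (C j).verts) ∧
  ∀ a b, K.Adj a b ↔ ∃ j, (C j).Adj a b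

/-- `kG₀` : the set of graphs that are disjoint unions of `k` copies of `G₀`. -/
def kCopies (k : ℕ) (G₀ : NatGraph) : Set NatGraph :=
  {K | ∃ C : Fin k → NatGraph, (∀ j, (C j).Iso G₀) ∧ IsDisjUnion K C}

/-- The *-join `G₁ * ⋯ * Gₙ` of a family of graphs (with pairwise disjoint
vertex sets): all graphs on the union of the vertex sets inducing each `Gᵢ`,
so that only edges joining distinct `Gᵢ`'s may be added. -/
def StarJoin {n : ℕ} (Gs : Fin n → NatGraph) : Set NatGraph :=
  {H | H.verts = Finset.univ.biUnion (fun i => (Gs i).verts) ∧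
    ∀ i, ∀ a ∈ (Gs i).verts, ∀ b ∈ (Gs i).verts, (H.Adj a b ↔ (Gs i).Adj a b)}

/-- `G * K₁` : the graphs obtained from `G` by adding one new vertex joined
arbitrarily to `G`. -/
def joinOne (G : NatGraph) : Set NatGraph :=
  {H | ∃ v, v ∉ G.verts ∧ H.verts = insert v G.verts ∧
    ∀ a ∈ G.verts, ∀ b ∈ G.verts, (H.Adj a b ↔ G.Adj a b)}

/-- A graph property: a nonempty isomorphism-closed class of graphs (it
contains the null graph, which by convention belongs to every property, and
some graph with at least one vertex). -/
def IsProperty (P : Set NatGraph) : Prop :=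
  nullGraph ∈ P ∧ (∃ G ∈ P, G.verts.Nonempty) ∧
    ∀ G H, NatGraph.Iso G H → G ∈ P → H ∈ P

/-- `P` is induced-hereditary. -/
def IndHer (P : Set NatGraph) : Prop := ∀ G H, G ∈ P → NatGraph.Le H G → H ∈ P

/-- `P` is additive: closed under disjoint unions. -/
def Additive' (P : Set NatGraph) : Prop :=
  ∀ G H K : NatGraph, G ∈ P → H ∈ P → IsDisjUnion K ![G, H] → K ∈ P

/-- An additive induced-hereditary graph property. -/
def IsAIH (P : Set NatGraph) : Prop := IsProperty P ∧ IndHer P ∧ Additive' P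

/-- A `(P₁,…,Pₙ)`-partition of `G` (parts may be empty). -/
def IsPartitionInto {n : ℕ} (Ps : Fin n → Set NatGraph) (G : NatGraph)
    (V : Fin n → Finset ℕ) : Prop :=
  (∀ i j, i ≠ j → Disjoint (V i) (V j)) ∧
  Finset.univ.biUnion V = G.verts ∧
  ∀ i, G.induce (V i) ∈ Ps i

/-- The product `P₁ ∘ ⋯ ∘ Pₙ` of properties. -/
def ProdProp {n : ℕ} (Ps : Fin n → Set NatGraph) : Set NatGraph :=
  {G | ∃ V : Fin n → Finset ℕ, IsPartitionInto Ps G V}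

/-- A `P`-decomposition of `G` with parts `V` : the parts are nonempty and
partition `V(G)`, and for every `k ≥ 1` every graph in
`kG[V₁] * ⋯ * kG[Vₙ]` belongs to `P`. -/
def IsDecomp (P : Set NatGraph) (G : NatGraph) {n : ℕ} (V : Fin n → Finset ℕ) : Prop :=
  (∀ i, (V i).Nonempty) ∧
  (∀ i j, i ≠ j → Disjoint (V i) (V j)) ∧
  Finset.univ.biUnion V = G.verts ∧
  ∀ k : ℕ, 0 < k → ∀ A : Fin n → NatGraph,
    (∀ i, A i ∈ kCopies k (G.induce (V i))) →
    (∀ i j, i ≠ j → Disjoint (A i).verts (A j).verts) →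
    ∀ H ∈ StarJoin A, H ∈ P

/-- `dec_P(G)` : the maximum number of parts of a `P`-decomposition of `G`
(`0` if there is none). -/
noncomputable def decP (P : Set NatGraph) (G : NatGraph) : ℕ :=
  sSup {n | ∃ V : Fin n → Finset ℕ, IsDecomp P G V}

/-- `G` is `P`-strict : `G ∈ P` but some graph in `G * K₁` is not in `P`. -/
def Strict (P : Set NatGraph) (G : NatGraph) : Prop :=
  G ∈ P ∧ ∃ H ∈ joinOne G, H ∉ P

/-- `dec(P) = min { dec_P(G) : G ∈ S(P) }`. -/
noncomputable def decOf (P : Set NatGraph) : ℕ :=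
  sInf (decP P '' {G | Strict P G})

/-- `dec_P(𝒢) = min { dec_P(G) : G ∈ 𝒢 }`. -/
noncomputable def decSet (P 𝒢 : Set NatGraph) : ℕ := sInf (decP P '' 𝒢)

/-- `⟨𝒢⟩` : the induced-hereditary property generated by `𝒢`. -/
def gen (𝒢 : Set NatGraph) : Set NatGraph := {G | ∃ H ∈ 𝒢, NatGraph.Le G H}

/-- `𝒢` is a generating set for `P`. -/
def Generates (𝒢 P : Set NatGraph) : Prop := gen 𝒢 = P

/-- `G` is uniquely `P`-decomposable: it has exactly one `P`-decomposition
(as an unordered partition) with `dec_P(G)` parts. -/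
def UniquelyDecomposable (P : Set NatGraph) (G : NatGraph) : Prop :=
  (∃ V : Fin (decP P G) → Finset ℕ, IsDecomp P G V) ∧
  ∀ V W : Fin (decP P G) → Finset ℕ, IsDecomp P G V → IsDecomp P G W →
    ∃ σ : Equiv.Perm (Fin (decP P G)), ∀ i, W i = V (σ i)

/-- Data exhibiting `Gstar` as a member of `s ⊛ G` : `s` pairwise disjoint
copies of `G` (given by isomorphisms) whose *-join contains `Gstar`. -/
structure CopyJoin (G : NatGraph) (s : ℕ) (Gstar : NatGraph) where
  copies : Fin s → NatGraph
  maps : Fin s → ℕ → ℕ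
  iso : ∀ k, G.IsoVia (copies k) (maps k)
  disj : ∀ k l, k ≠ l → Disjoint (copies k).verts (copies l).verts
  mem : Gstar ∈ StarJoin copies

/-- `Gstar ∈ s ⊛ G` respects `d₀ = (U₁,…,Uₘ)` : every added edge between two
different copies of `G` meets (copies of) two different `Uⱼ`'s, i.e. there is
no edge between the copies of the same `Uⱼ` in two different copies of `G`. -/
def CopyJoin.RespectsJoin {G : NatGraph} {s : ℕ} {Gstar : NatGraph}
    (cj : CopyJoin G s Gstar) {m : ℕ} (U : Fin m → Finset ℕ) : Prop :=
  ∀ k l : Fin s, k ≠ l → ∀ j : Fin m, ∀ a ∈ (U j).image (cj.maps k),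
    ∀ b ∈ (U j).image (cj.maps l), ¬Gstar.Adj a b

/-- A partition `V` of `Gstar ∈ s ⊛ G` respects `d₀ = (U₁,…,Uₘ)` uniformly:
for each part `Vᵢ` there is a single `Uⱼ` such that in every copy `Gᵏ`,
`Vᵢ ∩ V(Gᵏ)` is contained in the copy of `Uⱼ`. -/
def CopyJoin.RespectsUniformly {G : NatGraph} {s : ℕ} {Gstar : NatGraph}
    (cj : CopyJoin G s Gstar) {n m : ℕ}
    (V : Fin n → Finset ℕ) (U : Fin m → Finset ℕ) : Prop :=
  ∀ i, ∃ j, ∀ k, V i ∩ (cj.copies k).verts ⊆ (U j).image (cj.maps k)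

/-- An irreducible additive induced-hereditary property: one that is not the
product of two additive induced-hereditary properties. -/
def IrredProp (P : Set NatGraph) : Prop :=
  IsAIH P ∧ ¬∃ Q R : Set NatGraph, IsAIH Q ∧ IsAIH R ∧ P = ProdProp ![Q, R]


/-! ### Auxiliary development for Statement 4 -/

section S4Aux

open NatGraph

lemma induce_verts (G : NatGraph) (U : Finset ℕ) : (G.induce U).verts = G.verts ∩ U := rfl

lemma induce_adj (G : NatGraph) (U : Finset ℕ) (a b : ℕ) :
    (G.induce U).Adj a b ↔ G.Adj a b ∧ a ∈ U ∧ b ∈ U := Iff.rfl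

lemma iso_symm {G H : NatGraph} (h : G.Iso H) : H.Iso G := by
  classical
  obtain ⟨φ, hbij, hadj⟩ := h
  set g := Function.invFunOn φ (G.verts : Set ℕ) with hg
  have hinv : Set.InvOn g φ (G.verts : Set ℕ) (H.verts : Set ℕ) := hbij.invOn_invFunOn
  have hbij' : Set.BijOn g (H.verts : Set ℕ) (G.verts : Set ℕ) :=
    Set.BijOn.symm hinv.symm hbij
  refine ⟨g, hbij', ?_⟩
  intro x hx y hy
  have hgx : g x ∈ G.verts := hbij'.mapsTo hx
  have hgy : g y ∈ G.verts := hbij'.mapsTo hy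
  have h1 : φ (g x) = x := hinv.2 hx
  have h2 : φ (g y) = y := hinv.2 hy
  have h3 := hadj (g x) hgx (g y) hgy
  rw [h1, h2] at h3
  exact h3.symm

lemma empty_mem {P : Set NatGraph} (hP : IsProperty P) {G : NatGraph} (hG : G.verts = ∅) :
    G ∈ P := by
  refine hP.2.2 nullGraph G ⟨id, ?_, ?_⟩ hP.1
  · have : (G.verts : Set ℕ) = (∅ : Set ℕ) := by rw [hG]; simp
    rw [this]
    have : ((nullGraph.verts : Finset ℕ) : Set ℕ) = (∅ : Set ℕ) := by simp [nullGraph]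
    rw [this]
    exact Set.bijOn_empty id
  · intro a ha
    exact absurd ha (by simp [nullGraph])

/-- Relabelling of a graph along a map. -/
def relabel (X : NatGraph) (f : ℕ → ℕ) : NatGraph where
  verts := X.verts.image f
  Adj x y := x ≠ y ∧ ∃ a b, X.Adj a b ∧ x = f a ∧ y = f b
  symm := by
    rintro x y ⟨hxy, a, b, hab, rfl, rfl⟩
    exact ⟨Ne.symm hxy, b, a, X.symm a b hab, rfl, rfl⟩
  loopless := fun x h => h.1 rfl
  mem_of_adj := by
    rintro x y ⟨_, a, b, hab, rfl, rfl⟩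
    obtain ⟨h1, h2⟩ := X.mem_of_adj a b hab
    exact ⟨Finset.mem_image_of_mem f h1, Finset.mem_image_of_mem f h2⟩

lemma relabel_isoVia (X : NatGraph) {f : ℕ → ℕ} (hf : Function.Injective f) :
    X.IsoVia (relabel X f) f := by
  constructor
  · have h1 : ((relabel X f).verts : Set ℕ) = f '' (X.verts : Set ℕ) := by
      simp [relabel]
    rw [h1]
    exact (hf.injOn).bijOn_image
  · intro a ha b hb
    constructor
    · intro h
      have hne : a ≠ b := fun he => X.loopless a (he ▸ h)
      exact ⟨fun he => hne (hf he), a, b, h, rfl, rfl⟩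
    · rintro ⟨_, a', b', h', h1, h2⟩
      rw [hf h1, hf h2]
      exact h'

/-- `k` pairwise-disjoint canonical copies of a graph, as one graph. -/
def copiesG (Y : NatGraph) (k : ℕ) : NatGraph where
  verts := (Finset.range k).biUnion fun c => Y.verts.image (Nat.pair c)
  Adj x y := ∃ c < k, (relabel Y (Nat.pair c)).Adj x y
  symm := by
    rintro x y ⟨c, hc, h⟩
    exact ⟨c, hc, (relabel Y (Nat.pair c)).symm x y h⟩
  loopless := by
    rintro x ⟨c, hc, h⟩
    exact (relabel Y (Nat.pair c)).loopless x h
  mem_of_adj := by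
    rintro x y ⟨c, hc, h⟩
    obtain ⟨h1, h2⟩ := (relabel Y (Nat.pair c)).mem_of_adj x y h
    exact ⟨Finset.mem_biUnion.2 ⟨c, Finset.mem_range.2 hc, h1⟩,
      Finset.mem_biUnion.2 ⟨c, Finset.mem_range.2 hc, h2⟩⟩

lemma mem_copiesG {Y : NatGraph} {k x : ℕ} :
    x ∈ (copiesG Y k).verts ↔ ∃ c < k, ∃ a ∈ Y.verts, x = Nat.pair c a := by
  constructor
  · intro h
    obtain ⟨c, hc, hx⟩ := Finset.mem_biUnion.1 h
    obtain ⟨a, ha, rfl⟩ := Finset.mem_image.1 hx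
    exact ⟨c, Finset.mem_range.1 hc, a, ha, rfl⟩
  · rintro ⟨c, hc, a, ha, rfl⟩
    exact Finset.mem_biUnion.2 ⟨c, Finset.mem_range.2 hc, Finset.mem_image_of_mem _ ha⟩

lemma pair_injective (c : ℕ) : Function.Injective (Nat.pair c) :=
  fun a b h => (Nat.pair_eq_pair.1 h).2

lemma adj_copiesG {Y : NatGraph} {k x y : ℕ} :
    (copiesG Y k).Adj x y ↔
      ∃ c < k, ∃ a b, Y.Adj a b ∧ x = Nat.pair c a ∧ y = Nat.pair c b := by
  constructor
  · rintro ⟨c, hc, _, a, b, hab, rfl, rfl⟩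
    exact ⟨c, hc, a, b, hab, rfl, rfl⟩
  · rintro ⟨c, hc, a, b, hab, rfl, rfl⟩
    have hne : a ≠ b := fun he => Y.loopless a (he ▸ hab)
    exact ⟨c, hc, fun he => hne (pair_injective c he), a, b, hab, rfl, rfl⟩

lemma copiesG_mem_kCopies (Y : NatGraph) (k : ℕ) : copiesG Y k ∈ kCopies k Y := by
  refine ⟨fun c : Fin k => relabel Y (Nat.pair (c : ℕ)), ?_, ?_, ?_, ?_⟩
  · intro c
    exact iso_symm ⟨Nat.pair (c : ℕ), relabel_isoVia Y (pair_injective _)⟩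
  · intro c c' hcc
    rw [Finset.disjoint_left]
    intro x hx hx'
    obtain ⟨a, _, rfl⟩ := Finset.mem_image.1 hx
    obtain ⟨b, _, hb⟩ := Finset.mem_image.1 hx'
    exact hcc (Fin.ext (Nat.pair_eq_pair.1 hb).1.symm)
  · ext x
    rw [Finset.mem_biUnion]
    constructor
    · intro h
      obtain ⟨c, hc, a, ha, rfl⟩ := mem_copiesG.1 h
      exact ⟨⟨c, hc⟩, Finset.mem_univ _, Finset.mem_image_of_mem _ ha⟩
    · rintro ⟨c, _, hx⟩
      obtain ⟨a, ha, rfl⟩ := Finset.mem_image.1 hx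
      exact mem_copiesG.2 ⟨(c : ℕ), c.isLt, a, ha, rfl⟩
  · intro a b
    constructor
    · rintro ⟨c, hc, h⟩
      exact ⟨⟨c, hc⟩, h⟩
    · rintro ⟨c, h⟩
      exact ⟨(c : ℕ), c.isLt, h⟩

lemma copiesG_disjoint {Y Z : NatGraph} (h : Disjoint Y.verts Z.verts) (k : ℕ) :
    Disjoint (copiesG Y k).verts (copiesG Z k).verts := by
  rw [Finset.disjoint_left]
  intro x hx hx'
  obtain ⟨c, _, a, ha, rfl⟩ := mem_copiesG.1 hx
  obtain ⟨c', _, b, hb, hab⟩ := mem_copiesG.1 hx'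
  obtain ⟨rfl, rfl⟩ := Nat.pair_eq_pair.1 hab
  exact Finset.disjoint_left.1 h ha hb

/-- The graph hosting the copies `A i` together with a relabelled copy of `X`. -/
def joinGraph {n : ℕ} (A : Fin n → NatGraph) (X : NatGraph) (ψ : ℕ → ℕ) : NatGraph where
  verts := (Finset.univ.biUnion fun i => (A i).verts) ∪ X.verts.image ψ
  Adj x y := (∃ i, (A i).Adj x y) ∨
    (x ≠ y ∧ ¬(∃ i, x ∈ (A i).verts ∧ y ∈ (A i).verts) ∧
      ∃ a ∈ X.verts, ∃ b ∈ X.verts, X.Adj a b ∧ x = ψ a ∧ y = ψ b)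
  symm := by
    rintro x y (⟨i, h⟩ | ⟨hne, hnop, a, ha, b, hb, hab, rfl, rfl⟩)
    · exact Or.inl ⟨i, (A i).symm x y h⟩
    · exact Or.inr ⟨Ne.symm hne, fun ⟨i, h1, h2⟩ => hnop ⟨i, h2, h1⟩,
        b, hb, a, ha, X.symm a b hab, rfl, rfl⟩
  loopless := by
    rintro x (⟨i, h⟩ | ⟨hne, _⟩)
    · exact (A i).loopless x h
    · exact hne rfl
  mem_of_adj := by
    rintro x y (⟨i, h⟩ | ⟨_, _, a, ha, b, hb, _, rfl, rfl⟩)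
    · obtain ⟨h1, h2⟩ := (A i).mem_of_adj x y h
      exact ⟨Finset.mem_union_left _ (Finset.mem_biUnion.2 ⟨i, Finset.mem_univ _, h1⟩),
        Finset.mem_union_left _ (Finset.mem_biUnion.2 ⟨i, Finset.mem_univ _, h2⟩)⟩
    · exact ⟨Finset.mem_union_right _ (Finset.mem_image_of_mem _ ha),
        Finset.mem_union_right _ (Finset.mem_image_of_mem _ hb)⟩

/-- The key embedding lemma: if `ψ` maps `X` injectively into the canonical
`k`-fold copies of the parts of a `P`-decomposition of `H`, consistently on
each part, then `X ∈ P`. -/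
lemma embed_mem {P : Set NatGraph} (hher : IndHer P)
    {H : NatGraph} {n : ℕ} {W : Fin n → Finset ℕ} (hdec : IsDecomp P H W)
    {k : ℕ} (hk : 0 < k) (X : NatGraph) (ψ : ℕ → ℕ)
    (hinj : Set.InjOn ψ (X.verts : Set ℕ))
    (hmap : ∀ a ∈ X.verts, ∃ i, ψ a ∈ (copiesG (H.induce (W i)) k).verts)
    (hcons : ∀ a ∈ X.verts, ∀ b ∈ X.verts, ∀ i,
      ψ a ∈ (copiesG (H.induce (W i)) k).verts →
      ψ b ∈ (copiesG (H.induce (W i)) k).verts →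
      (X.Adj a b ↔ (copiesG (H.induce (W i)) k).Adj (ψ a) (ψ b))) :
    X ∈ P := by
  classical
  set A : Fin n → NatGraph := fun i => copiesG (H.induce (W i)) k with hA
  have hAdisj : ∀ i j, i ≠ j → Disjoint (A i).verts (A j).verts := by
    intro i j hij
    apply copiesG_disjoint
    rw [induce_verts, induce_verts]
    exact (hdec.2.1 i j hij).mono Finset.inter_subset_right Finset.inter_subset_right
  have hAmem : ∀ i, A i ∈ kCopies k (H.induce (W i)) := fun i => copiesG_mem_kCopies _ k
  set H' := joinGraph A X ψ with hH'
  have hXsub : X.verts.image ψ ⊆ Finset.univ.biUnion fun i => (A i).verts := by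
    intro x hx
    obtain ⟨a, ha, rfl⟩ := Finset.mem_image.1 hx
    obtain ⟨i, hi⟩ := hmap a ha
    exact Finset.mem_biUnion.2 ⟨i, Finset.mem_univ i, hi⟩
  have hverts : H'.verts = Finset.univ.biUnion fun i => (A i).verts :=
    Finset.union_eq_left.2 hXsub
  have hstar : H' ∈ StarJoin A := by
    refine ⟨hverts, ?_⟩
    intro i a hai b hbi
    constructor
    · rintro (⟨j, hj⟩ | ⟨_, hnop, _⟩)
      · rcases eq_or_ne i j with rfl | hij
        · exact hj
        · exact absurd hai
            (Finset.disjoint_left.1 (hAdisj j i (Ne.symm hij)) ((A j).mem_of_adj _ _ hj).1)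
      · exact absurd ⟨i, hai, hbi⟩ hnop
    · exact fun h => Or.inl ⟨i, h⟩
  have hH'P : H' ∈ P := hdec.2.2.2 k hk A hAmem hAdisj H' hstar
  refine hher H' X hH'P ⟨X.verts.image ψ, ?_, ψ, ?_, ?_⟩
  · exact hverts ▸ hXsub
  · have h1 : (H'.induce (X.verts.image ψ)).verts = X.verts.image ψ := by
      rw [induce_verts]
      exact Finset.inter_eq_right.2 (hverts ▸ hXsub)
    rw [h1]
    have h2 : ((X.verts.image ψ : Finset ℕ) : Set ℕ) = ψ '' (X.verts : Set ℕ) := by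
      simp
    rw [h2]
    exact hinj.bijOn_image
  · intro a ha b hb
    have hmema : ψ a ∈ X.verts.image ψ := Finset.mem_image_of_mem _ ha
    have hmemb : ψ b ∈ X.verts.image ψ := Finset.mem_image_of_mem _ hb
    rw [induce_adj]
    constructor
    · intro hab
      refine ⟨?_, hmema, hmemb⟩
      by_cases hsame : ∃ i, ψ a ∈ (A i).verts ∧ ψ b ∈ (A i).verts
      · obtain ⟨i, h1, h2⟩ := hsame
        exact Or.inl ⟨i, (hcons a ha b hb i h1 h2).1 hab⟩
      · have hne : a ≠ b := fun he => X.loopless a (he ▸ hab)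
        exact Or.inr ⟨fun he => hne (hinj ha hb he), hsame, a, ha, b, hb, hab, rfl, rfl⟩
    · rintro ⟨(⟨i, hi⟩ | ⟨_, _, a', ha', b', hb', hab', h1, h2⟩), _, _⟩
      · obtain ⟨hma, hmb⟩ := (A i).mem_of_adj _ _ hi
        exact (hcons a ha b hb i hma hmb).2 hi
      · have hea : a = a' := hinj ha ha' h1
        have heb : b = b' := hinj hb hb' h2
        rw [hea, heb]
        exact hab'

lemma decomp_transfer {P : Set NatGraph} (hP : IsProperty P) (hher : IndHer P)
    {G H : NatGraph} (hstrict : Strict P G)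
    {T : Finset ℕ} (hT : T ⊆ H.verts) {φ : ℕ → ℕ}
    (hφ : G.IsoVia (H.induce T) φ)
    {n : ℕ} {W : Fin n → Finset ℕ} (hW : IsDecomp P H W) :
    ∃ V : Fin n → Finset ℕ, IsDecomp P G V := by
  classical
  set V : Fin n → Finset ℕ := fun i => G.verts.filter (fun a => φ a ∈ W i) with hV
  have hφmem : ∀ a ∈ G.verts, φ a ∈ H.verts ∧ φ a ∈ T := by
    intro a ha
    have h := hφ.1.mapsTo (show a ∈ (G.verts : Set ℕ) from ha)
    have h2 : φ a ∈ (H.induce T).verts := h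
    rw [induce_verts] at h2
    exact Finset.mem_inter.1 h2
  have hφW : ∀ a ∈ G.verts, ∃ i, φ a ∈ W i := by
    intro a ha
    have h1 : φ a ∈ H.verts := (hφmem a ha).1
    rw [← hW.2.2.1] at h1
    obtain ⟨i, _, hi⟩ := Finset.mem_biUnion.1 h1
    exact ⟨i, hi⟩
  have hGadj : ∀ a ∈ G.verts, ∀ b ∈ G.verts, (G.Adj a b ↔ H.Adj (φ a) (φ b)) := by
    intro a ha b hb
    rw [hφ.2 a ha b hb, induce_adj]
    exact ⟨fun h => h.1, fun h => ⟨h, (hφmem a ha).2, (hφmem b hb).2⟩⟩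
  have hVmem : ∀ {i a}, a ∈ V i ↔ a ∈ G.verts ∧ φ a ∈ W i := by
    intro i a; rw [hV]; exact Finset.mem_filter
  have hVne : ∀ i, (V i).Nonempty := by
    intro i0
    by_contra hempty
    rw [Finset.not_nonempty_iff_eq_empty] at hempty
    have hVempty : ∀ a ∈ G.verts, φ a ∉ W i0 := by
      intro a ha hin
      have h : a ∈ V i0 := hVmem.2 ⟨ha, hin⟩
      rw [hempty] at h
      exact absurd h (Finset.notMem_empty a)
    obtain ⟨hGP, H₂, hH₂join, hH₂P⟩ := hstrict
    obtain ⟨v, hv, hverts, hagree⟩ := hH₂join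
    obtain ⟨w₀, hw₀⟩ := hW.1 i0
    have hw₀H : w₀ ∈ H.verts := by
      rw [← hW.2.2.1]
      exact Finset.mem_biUnion.2 ⟨i0, Finset.mem_univ _, hw₀⟩
    apply hH₂P
    set ψ : ℕ → ℕ := fun x => if x ∈ G.verts then Nat.pair 0 (φ x) else Nat.pair 1 w₀
      with hψ
    have hψg : ∀ {x}, x ∈ G.verts → ψ x = Nat.pair 0 (φ x) := by
      intro x hx; simp only [hψ, if_pos hx]
    have hψv : ψ v = Nat.pair 1 w₀ := by simp only [hψ, if_neg hv]
    refine embed_mem hher hW (k := 2) (by norm_num) H₂ ψ ?_ ?_ ?_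
    · intro x hx y hy hxy
      have hx' : x ∈ H₂.verts := hx
      have hy' : y ∈ H₂.verts := hy
      rw [hverts, Finset.mem_insert] at hx' hy'
      rcases hx' with rfl | hxg <;> rcases hy' with rfl | hyg
      · rfl
      · rw [hψv, hψg hyg] at hxy
        exact absurd (Nat.pair_eq_pair.1 hxy).1 (by norm_num)
      · rw [hψv, hψg hxg] at hxy
        exact absurd (Nat.pair_eq_pair.1 hxy).1 (by norm_num)
      · rw [hψg hxg, hψg hyg] at hxy
        exact hφ.1.injOn hxg hyg (Nat.pair_eq_pair.1 hxy).2
    · intro a ha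
      rw [hverts, Finset.mem_insert] at ha
      rcases ha with rfl | hag
      · refine ⟨i0, mem_copiesG.2 ⟨1, by norm_num, w₀, ?_, hψv⟩⟩
        rw [induce_verts]
        exact Finset.mem_inter.2 ⟨hw₀H, hw₀⟩
      · obtain ⟨i, hi⟩ := hφW a hag
        refine ⟨i, mem_copiesG.2 ⟨0, by norm_num, φ a, ?_, hψg hag⟩⟩
        rw [induce_verts]
        exact Finset.mem_inter.2 ⟨(hφmem a hag).1, hi⟩
    · intro a ha b hb i hai hbi
      rw [hverts, Finset.mem_insert] at ha hb
      rcases ha with rfl | hag <;> rcases hb with rfl | hbg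
      · constructor
        · intro h; exact absurd h (H₂.loopless _)
        · intro h; exact absurd h ((copiesG _ 2).loopless _)
      · exfalso
        obtain ⟨c, _, a', ha', heq⟩ := mem_copiesG.1 hai
        rw [hψv] at heq
        obtain ⟨_, rfl⟩ := Nat.pair_eq_pair.1 heq
        rw [induce_verts] at ha'
        have hwi : w₀ ∈ W i := (Finset.mem_inter.1 ha').2
        have hii0 : i = i0 := by
          by_contra h
          exact Finset.disjoint_left.1 (hW.2.1 i i0 h) hwi hw₀
        obtain ⟨c', _, b', hb', heq'⟩ := mem_copiesG.1 hbi
        rw [hψg hbg] at heq'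
        obtain ⟨_, rfl⟩ := Nat.pair_eq_pair.1 heq'
        rw [induce_verts] at hb'
        have : φ b ∈ W i := (Finset.mem_inter.1 hb').2
        rw [hii0] at this
        exact hVempty b hbg this
      · exfalso
        obtain ⟨c, _, b', hb', heq⟩ := mem_copiesG.1 hbi
        rw [hψv] at heq
        obtain ⟨_, rfl⟩ := Nat.pair_eq_pair.1 heq
        rw [induce_verts] at hb'
        have hwi : w₀ ∈ W i := (Finset.mem_inter.1 hb').2
        have hii0 : i = i0 := by
          by_contra h
          exact Finset.disjoint_left.1 (hW.2.1 i i0 h) hwi hw₀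
        obtain ⟨c', _, a', ha', heq'⟩ := mem_copiesG.1 hai
        rw [hψg hag] at heq'
        obtain ⟨_, rfl⟩ := Nat.pair_eq_pair.1 heq'
        rw [induce_verts] at ha'
        have : φ a ∈ W i := (Finset.mem_inter.1 ha').2
        rw [hii0] at this
        exact hVempty a hag this
      · obtain ⟨c, _, a', ha', heq⟩ := mem_copiesG.1 hai
        rw [hψg hag] at heq
        obtain ⟨rfl, rfl⟩ := Nat.pair_eq_pair.1 heq
        rw [induce_verts] at ha'
        obtain ⟨c', _, b', hb', heq'⟩ := mem_copiesG.1 hbi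
        rw [hψg hbg] at heq'
        obtain ⟨rfl, rfl⟩ := Nat.pair_eq_pair.1 heq'
        rw [induce_verts] at hb'
        rw [hagree a hag b hbg, hGadj a hag b hbg, hψg hag, hψg hbg, adj_copiesG]
        constructor
        · intro h
          refine ⟨0, by norm_num, φ a, φ b, ?_, rfl, rfl⟩
          exact (induce_adj H (W i) _ _).2
            ⟨h, (Finset.mem_inter.1 ha').2, (Finset.mem_inter.1 hb').2⟩
        · rintro ⟨c, _, a'', b'', hadj', he1, he2⟩
          obtain ⟨rfl, rfl⟩ := Nat.pair_eq_pair.1 he1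
          obtain ⟨_, rfl⟩ := Nat.pair_eq_pair.1 he2
          exact ((induce_adj H (W i) _ _).1 hadj').1
  have hVdisj : ∀ i j, i ≠ j → Disjoint (V i) (V j) := by
    intro i j hij
    rw [Finset.disjoint_left]
    intro a hai haj
    exact Finset.disjoint_left.1 (hW.2.1 i j hij) (hVmem.1 hai).2 (hVmem.1 haj).2
  have hVunion : Finset.univ.biUnion V = G.verts := by
    apply Finset.Subset.antisymm
    · intro a ha
      obtain ⟨i, _, hi⟩ := Finset.mem_biUnion.1 ha
      exact (hVmem.1 hi).1
    · intro a ha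
      obtain ⟨i, hi⟩ := hφW a ha
      exact Finset.mem_biUnion.2 ⟨i, Finset.mem_univ _, hVmem.2 ⟨ha, hi⟩⟩
  refine ⟨V, hVne, hVdisj, hVunion, ?_⟩
  intro k hk B hB hBdisj X hX
  choose D hD using hB
  choose θ hθ using fun i (j : Fin k) => (hD i).1 j
  have huniq : ∀ {x : ℕ} {i i' : Fin n} {c c' : Fin k},
      x ∈ (D i c).verts → x ∈ (D i' c').verts → i = i' ∧ c = c' := by
    intro x i i' c c' h1 h2
    have hxB : x ∈ (B i).verts := by
      rw [(hD i).2.2.1]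
      exact Finset.mem_biUnion.2 ⟨c, Finset.mem_univ _, h1⟩
    have hxB' : x ∈ (B i').verts := by
      rw [(hD i').2.2.1]
      exact Finset.mem_biUnion.2 ⟨c', Finset.mem_univ _, h2⟩
    have hii : i = i' := by
      by_contra h
      exact Finset.disjoint_left.1 (hBdisj i i' h) hxB hxB'
    subst hii
    refine ⟨rfl, ?_⟩
    by_contra h
    exact Finset.disjoint_left.1 ((hD i).2.1 c c' h) h1 h2
  have hBverts : ∀ {i : Fin n} {c : Fin k} {x : ℕ}, x ∈ (D i c).verts → x ∈ (B i).verts := by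
    intro i c x h
    rw [(hD i).2.2.1]
    exact Finset.mem_biUnion.2 ⟨c, Finset.mem_univ _, h⟩
  set ψ : ℕ → ℕ := fun x => if h : ∃ p : Fin n × Fin k, x ∈ (D p.1 p.2).verts
    then Nat.pair ((h.choose.2 : Fin k) : ℕ) (φ (θ h.choose.1 h.choose.2 x)) else 0
    with hψdef
  have hψ_eq : ∀ {i : Fin n} {c : Fin k} {x : ℕ}, x ∈ (D i c).verts →
      ψ x = Nat.pair (c : ℕ) (φ (θ i c x)) := by
    intro i c x hx
    have hex : ∃ p : Fin n × Fin k, x ∈ (D p.1 p.2).verts := ⟨(i, c), hx⟩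
    simp only [hψdef, dif_pos hex]
    obtain ⟨h1, h2⟩ := huniq hex.choose_spec hx
    rw [h1, h2]
  have hXverts : ∀ x ∈ X.verts, ∃ (i : Fin n) (c : Fin k), x ∈ (D i c).verts := by
    intro x hx
    rw [hX.1] at hx
    obtain ⟨i, _, hi⟩ := Finset.mem_biUnion.1 hx
    rw [(hD i).2.2.1] at hi
    obtain ⟨c, _, hc⟩ := Finset.mem_biUnion.1 hi
    exact ⟨i, c, hc⟩
  have hθmem : ∀ {i : Fin n} {c : Fin k} {x : ℕ}, x ∈ (D i c).verts →
      θ i c x ∈ G.verts ∧ θ i c x ∈ V i := by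
    intro i c x hx
    have h := (hθ i c).1.mapsTo (show x ∈ ((D i c).verts : Set ℕ) from hx)
    have h2 : θ i c x ∈ (G.induce (V i)).verts := h
    rw [induce_verts] at h2
    exact Finset.mem_inter.1 h2
  have hθW : ∀ {i : Fin n} {c : Fin k} {x : ℕ}, x ∈ (D i c).verts →
      φ (θ i c x) ∈ W i := by
    intro i c x hx
    exact (hVmem.1 (hθmem hx).2).2
  refine embed_mem hher hW hk X ψ ?_ ?_ ?_
  · intro x hx y hy hxy
    obtain ⟨i, c, hxD⟩ := hXverts x hx
    obtain ⟨j, c', hyD⟩ := hXverts y hy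
    rw [hψ_eq hxD, hψ_eq hyD] at hxy
    obtain ⟨hcc, hφφ⟩ := Nat.pair_eq_pair.1 hxy
    have h1 := hθmem hxD
    have h2 := hθmem hyD
    have hθeq : θ i c x = θ j c' y := hφ.1.injOn h1.1 h2.1 hφφ
    have hij : i = j := by
      by_contra hne'
      have hv1 : θ i c x ∈ V i := h1.2
      have hv2 : θ i c x ∈ V j := hθeq ▸ h2.2
      exact Finset.disjoint_left.1 (hVdisj i j hne') hv1 hv2
    subst hij
    have hcc' : c = c' := Fin.ext hcc
    subst hcc'
    exact (hθ i c).1.injOn hxD hyD hθeq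
  · intro a ha
    obtain ⟨i, c, haD⟩ := hXverts a ha
    refine ⟨i, mem_copiesG.2 ⟨(c : ℕ), c.isLt, φ (θ i c a), ?_, hψ_eq haD⟩⟩
    rw [induce_verts]
    exact Finset.mem_inter.2 ⟨(hφmem _ (hθmem haD).1).1, hθW haD⟩
  · intro a ha b hb i hai hbi
    obtain ⟨i₁, c₁, haD⟩ := hXverts a ha
    obtain ⟨i₂, c₂, hbD⟩ := hXverts b hb
    rw [hψ_eq haD] at hai ⊢
    rw [hψ_eq hbD] at hbi ⊢
    obtain ⟨c', _, a', ha', heq⟩ := mem_copiesG.1 hai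
    obtain ⟨rfl, rfl⟩ := Nat.pair_eq_pair.1 heq
    rw [induce_verts] at ha'
    obtain ⟨c'', _, b', hb', heq'⟩ := mem_copiesG.1 hbi
    obtain ⟨rfl, rfl⟩ := Nat.pair_eq_pair.1 heq'
    rw [induce_verts] at hb'
    have hii₁ : i = i₁ := by
      by_contra h
      exact Finset.disjoint_left.1 (hW.2.1 i i₁ h) (Finset.mem_inter.1 ha').2 (hθW haD)
    have hii₂ : i = i₂ := by
      by_contra h
      exact Finset.disjoint_left.1 (hW.2.1 i i₂ h) (Finset.mem_inter.1 hb').2 (hθW hbD)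
    subst i₁
    subst i₂
    have haB : a ∈ (B i).verts := hBverts haD
    have hbB : b ∈ (B i).verts := hBverts hbD
    rw [hX.2 i a haB b hbB, (hD i).2.2.2 a b, adj_copiesG]
    constructor
    · rintro ⟨c₃, hadj3⟩
      obtain ⟨hma, hmb⟩ := (D i c₃).mem_of_adj a b hadj3
      obtain ⟨_, hc31⟩ := huniq hma haD
      obtain ⟨_, hc32⟩ := huniq hmb hbD
      subst hc31
      subst hc32
      have hGi := ((hθ i c₃).2 a hma b hmb).1 hadj3
      rw [induce_adj] at hGi
      have hH : H.Adj (φ (θ i c₃ a)) (φ (θ i c₃ b)) :=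
        (hGadj _ (hθmem haD).1 _ (hθmem hbD).1).1 hGi.1
      refine ⟨(c₃ : ℕ), c₃.isLt, φ (θ i c₃ a), φ (θ i c₃ b), ?_, rfl, rfl⟩
      exact (induce_adj H (W i) _ _).2 ⟨hH, hθW haD, hθW hbD⟩
    · rintro ⟨c₃, _, a'', b'', hadj', he1, he2⟩
      obtain ⟨hc1, rfl⟩ := Nat.pair_eq_pair.1 he1
      obtain ⟨hc2, rfl⟩ := Nat.pair_eq_pair.1 he2
      have hc12 : c₁ = c₂ := Fin.ext (hc1.trans hc2.symm)
      subst hc12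
      have hH : H.Adj (φ (θ i c₁ a)) (φ (θ i c₁ b)) := ((induce_adj H (W i) _ _).1 hadj').1
      have hG : G.Adj (θ i c₁ a) (θ i c₁ b) :=
        (hGadj _ (hθmem haD).1 _ (hθmem hbD).1).2 hH
      have hInd : (G.induce (V i)).Adj (θ i c₁ a) (θ i c₁ b) :=
        (induce_adj G (V i) _ _).2 ⟨hG, (hθmem haD).2, (hθmem hbD).2⟩
      exact ⟨c₁, ((hθ i c₁).2 a haD b hbD).2 hInd⟩

lemma decP_le {P : Set NatGraph} (hP : IsProperty P) (hher : IndHer P)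
    {G H : NatGraph} (hstrict : Strict P G) (hle : G.Le H) :
    decP P H ≤ decP P G := by
  obtain ⟨T, hT, φ, hφ⟩ := hle
  have htrans : ∀ n, (∃ W : Fin n → Finset ℕ, IsDecomp P H W) →
      ∃ V : Fin n → Finset ℕ, IsDecomp P G V := by
    rintro n ⟨W, hW⟩
    exact decomp_transfer hP hher hstrict hT hφ hW
  have hbdd : BddAbove {n | ∃ V : Fin n → Finset ℕ, IsDecomp P G V} := by
    refine ⟨G.verts.card, ?_⟩
    rintro n ⟨V', hV⟩
    have hcard : (Finset.univ.biUnion V').card = ∑ i, (V' i).card :=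
      Finset.card_biUnion (fun i _ j _ h => hV.2.1 i j h)
    calc n = ∑ _i : Fin n, 1 := by simp
      _ ≤ ∑ i, (V' i).card := Finset.sum_le_sum (fun i _ => Finset.card_pos.2 (hV.1 i))
      _ = (Finset.univ.biUnion V').card := hcard.symm
      _ = G.verts.card := by rw [hV.2.2.1]
  show sSup {n | ∃ W : Fin n → Finset ℕ, IsDecomp P H W} ≤
    sSup {n | ∃ V : Fin n → Finset ℕ, IsDecomp P G V}
  rcases Set.eq_empty_or_nonempty {n | ∃ W : Fin n → Finset ℕ, IsDecomp P H W} with he | hne'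
  · rw [he, csSup_empty]
    exact bot_le
  · exact csSup_le hne' (fun n hn => le_csSup hbdd (htrans n hn))

lemma empty_iso {G : NatGraph} (hG : G.verts = ∅) : NatGraph.Iso nullGraph G := by
  refine ⟨id, ?_, ?_⟩
  · have h1 : ((nullGraph.verts : Finset ℕ) : Set ℕ) = (∅ : Set ℕ) := by simp [nullGraph]
    have h2 : (G.verts : Set ℕ) = (∅ : Set ℕ) := by rw [hG]; simp
    rw [h1, h2]
    exact Set.bijOn_empty id
  · intro a ha
    exact absurd ha (by simp [nullGraph])

lemma strict_exists {P : Set NatGraph} (hP : IsProperty P) (hne : P ≠ Set.univ) :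
    ∃ G, Strict P G := by
  obtain ⟨F, hF⟩ := (Set.ne_univ_iff_exists_notMem P).1 hne
  suffices h : ∀ N, ∀ F : NatGraph, F.verts.card ≤ N → F ∉ P → ∃ G, Strict P G from
    h F.verts.card F le_rfl hF
  intro N
  induction N with
  | zero =>
    intro F hcard hF
    exact absurd (empty_mem hP (Finset.card_eq_zero.1 (Nat.le_zero.1 hcard))) hF
  | succ N ih =>
    intro F hcard hF
    rcases Finset.eq_empty_or_nonempty F.verts with hemp | ⟨v, hv⟩
    · exact absurd (empty_mem hP hemp) hF
    · set F₀ := F.induce (F.verts.erase v) with hF₀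
      have hF₀verts : F₀.verts = F.verts.erase v := by
        rw [hF₀, induce_verts]
        exact Finset.inter_eq_right.2 (Finset.erase_subset _ _)
      by_cases hmem : F₀ ∈ P
      · refine ⟨F₀, hmem, F, ⟨v, ?_, ?_, ?_⟩, hF⟩
        · rw [hF₀verts]; exact Finset.notMem_erase v _
        · rw [hF₀verts, Finset.insert_erase hv]
        · intro a ha b hb
          rw [hF₀verts] at ha hb
          constructor
          · intro h
            exact (induce_adj F _ a b).2 ⟨h, ha, hb⟩
          · intro h
            exact ((induce_adj F _ a b).1 h).1
      · refine ih F₀ ?_ hmem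
        rw [hF₀verts]
        have h1 := Finset.card_erase_of_mem hv
        omega

end S4Aux

-- STATEMENT 4
theorem statement4 (P : Set NatGraph) (hP : IsProperty P) (hher : IndHer P)
    (hne : P ≠ Set.univ) (𝒢 : Set NatGraph) (hgen : Generates 𝒢 P) :
    decSet P 𝒢 ≤ decSet P {G | Strict P G} ∧
    decSet P {G | Strict P G} = decOf P ∧
    (𝒢 ⊆ {G | Strict P G} → decSet P 𝒢 = decSet P {G | Strict P G}) := by
  have hgen' : gen 𝒢 = P := hgen
  have hS : ∃ G, Strict P G := strict_exists hP hne
  have h𝒢ne : ∃ Hg, Hg ∈ 𝒢 := by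
    have h0 : nullGraph ∈ P := hP.1
    rw [← hgen'] at h0
    obtain ⟨Hg, hHg, _⟩ := h0
    exact ⟨Hg, hHg⟩
  have hmain : decSet P 𝒢 ≤ decSet P {G | Strict P G} := by
    obtain ⟨G₀, hG₀⟩ := hS
    have hne' : (decP P '' {G | Strict P G}).Nonempty := ⟨decP P G₀, G₀, hG₀, rfl⟩
    obtain ⟨G, hGstrict, hGdec⟩ := Nat.sInf_mem hne'
    have hGP : G ∈ P := hGstrict.1
    rw [← hgen'] at hGP
    obtain ⟨Hg, hHg𝒢, hle⟩ := hGP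
    have hkey : decP P Hg ≤ decP P G := decP_le hP hher hGstrict hle
    calc decSet P 𝒢 ≤ decP P Hg := Nat.sInf_le ⟨Hg, hHg𝒢, rfl⟩
      _ ≤ decP P G := hkey
      _ = decSet P {G | Strict P G} := hGdec
  refine ⟨hmain, rfl, ?_⟩
  intro hsub
  refine le_antisymm hmain ?_
  obtain ⟨Hg, hHg⟩ := h𝒢ne
  obtain ⟨G, hG𝒢, hGeq⟩ := Nat.sInf_mem (⟨decP P Hg, Hg, hHg, rfl⟩ :
    (decP P '' 𝒢).Nonempty)
  calc decSet P {G | Strict P G} ≤ decP P G := Nat.sInf_le ⟨G, hsub hG𝒢, rfl⟩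
    _ = decSet P 𝒢 := hGeq
end

section
/- Let P be an additive induced-hereditary graph property that is not the class of all graphs, and let 𝒢 be a generating set for P. Then 𝒢↓ := {G ∈ 𝒢 : G is P-strict and dec_P(G) = dec(P)} is also a generating set for P. -/
/-! ### Auxiliary lemmas -/

section Aux

open Finset

namespace NatGraph

lemma isoVia_induce_self (G : NatGraph) : G.IsoVia (G.induce G.verts) id := by
  constructor
  · simpa [induce, Set.BijOn] using Set.bijOn_id _
  · intro a ha b hb
    simp [induce, ha, hb]

lemma iso_refl (G : NatGraph) : G.Iso G :=
  ⟨id, by simpa [Set.BijOn] using Set.bijOn_id _, fun a _ b _ => Iff.rfl⟩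

lemma isoVia_comp {G H K : NatGraph} {φ ψ : ℕ → ℕ} (h1 : G.IsoVia H φ)
    (h2 : H.IsoVia K ψ) : G.IsoVia K (ψ ∘ φ) := by
  refine ⟨h2.1.comp h1.1, fun a ha b hb => ?_⟩
  have hφa : φ a ∈ H.verts := h1.1.1 ha
  have hφb : φ b ∈ H.verts := h1.1.1 hb
  exact (h1.2 a ha b hb).trans (h2.2 _ hφa _ hφb)

lemma iso_trans {G H K : NatGraph} (h1 : G.Iso H) (h2 : H.Iso K) : G.Iso K := by
  obtain ⟨φ, h1⟩ := h1; obtain ⟨ψ, h2⟩ := h2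
  exact ⟨ψ ∘ φ, isoVia_comp h1 h2⟩

lemma le_refl (G : NatGraph) : G.Le G :=
  ⟨G.verts, Finset.Subset.refl _, id, isoVia_induce_self G⟩

lemma le_of_iso {G H : NatGraph} (h : G.Iso H) : G.Le H := by
  obtain ⟨φ, hφ⟩ := h
  exact ⟨H.verts, Finset.Subset.refl _, id ∘ φ, isoVia_comp hφ (isoVia_induce_self H)⟩

lemma induce_mono {H K : NatGraph} {χ : ℕ → ℕ} {U U' : Finset ℕ}
    (h : H.IsoVia (K.induce U') χ) (hU : U ⊆ H.verts) (hU' : U' ⊆ K.verts) :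
    (H.induce U).IsoVia (K.induce (U.image χ)) χ := by
  have hverts : (H.induce U).verts = U := by
    simp only [induce]
    exact Finset.inter_eq_right.2 hU
  have himg : ∀ a ∈ U, χ a ∈ K.verts ∩ U' := by
    intro a ha
    have := h.1.1 (by exact_mod_cast (hU ha : a ∈ H.verts))
    simpa [induce] using this
  constructor
  · rw [hverts]
    have hverts2 : (K.induce (U.image χ)).verts = U.image χ := by
      simp only [induce]
      refine Finset.inter_eq_right.2 ?_
      intro x hx
      obtain ⟨a, ha, rfl⟩ := Finset.mem_image.1 hx
      exact (Finset.mem_inter.1 (himg a ha)).1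
    rw [hverts2]
    refine ⟨fun a ha => ?_, fun a ha b hb hab => ?_, fun x hx => ?_⟩
    · exact_mod_cast Finset.mem_image_of_mem χ (by exact_mod_cast ha)
    · exact h.1.2.1 (hU (by exact_mod_cast ha)) (hU (by exact_mod_cast hb)) hab
    · obtain ⟨a, ha, rfl⟩ := Finset.mem_image.1 (by exact_mod_cast hx)
      exact ⟨a, by exact_mod_cast ha, rfl⟩
  · intro a ha b hb
    rw [hverts] at ha hb
    have h1 := h.2 a (hU ha) b (hU hb)
    have hka := himg a ha; have hkb := himg b hb
    simp only [induce] at h1 ⊢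
    constructor
    · rintro ⟨hadj, -, -⟩
      have := h1.1 hadj
      exact ⟨this.1, Finset.mem_image_of_mem χ ha, Finset.mem_image_of_mem χ hb⟩
    · rintro ⟨hadj, -, -⟩
      exact ⟨h1.2 ⟨hadj, (Finset.mem_inter.1 hka).2, (Finset.mem_inter.1 hkb).2⟩, ha, hb⟩

lemma le_trans {G H K : NatGraph} (h1 : G.Le H) (h2 : H.Le K) : G.Le K := by
  obtain ⟨U, hU, φ, hφ⟩ := h1
  obtain ⟨U', hU', χ, hχ⟩ := h2
  refine ⟨U.image χ, ?_, χ ∘ φ, isoVia_comp hφ (induce_mono hχ hU hU')⟩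
  intro x hx
  obtain ⟨a, ha, rfl⟩ := Finset.mem_image.1 hx
  have := hχ.1.1 (hU ha)
  simpa [induce] using (Finset.mem_inter.1 (by simpa [induce] using this)).1

end NatGraph

/-- A fresh vertex outside a finite set. -/
lemma fresh_not_mem (s : Finset ℕ) : s.sup id + 1 ∉ s := by
  intro h
  have := Finset.le_sup (f := id) h
  simp only [id] at this
  omega


/-- Add one vertex `w` joined to `S`. -/
def addVertex (H : NatGraph) (w : ℕ) (S : Finset ℕ) (hw : w ∉ H.verts)
    (hS : S ⊆ H.verts) : NatGraph where
  verts := insert w H.verts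
  Adj X Y := H.Adj X Y ∨ (X = w ∧ Y ∈ S) ∨ (Y = w ∧ X ∈ S)
  symm := by
    intro a b h
    rcases h with h | h | h
    · exact Or.inl (H.symm a b h)
    · exact Or.inr (Or.inr h)
    · exact Or.inr (Or.inl h)
  loopless := by
    intro a h
    rcases h with h | ⟨rfl, h⟩ | ⟨rfl, h⟩
    · exact H.loopless a h
    · exact hw (hS h)
    · exact hw (hS h)
  mem_of_adj := by
    intro a b h
    rcases h with h | ⟨rfl, h⟩ | ⟨rfl, h⟩
    · exact ⟨Finset.mem_insert_of_mem (H.mem_of_adj a b h).1,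
        Finset.mem_insert_of_mem (H.mem_of_adj a b h).2⟩
    · exact ⟨Finset.mem_insert_self _ _, Finset.mem_insert_of_mem (hS h)⟩
    · exact ⟨Finset.mem_insert_of_mem (hS h), Finset.mem_insert_self _ _⟩

/-- If `F` is `P`-strict, `F ≤ H` and `H ∈ P`, then `H` is `P`-strict. -/
lemma strict_mono_le {P : Set NatGraph} (hher : IndHer P) {F H : NatGraph}
    (hF : Strict P F) (hFH : F.Le H) (hH : H ∈ P) : Strict P H := by
  classical
  obtain ⟨hFP, F', ⟨v, hv, hFv, hadjF⟩, hF'P⟩ := hF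
  obtain ⟨U, hU, φ, hφ⟩ := hFH
  have hUverts : (H.induce U).verts = U := by
    simp only [NatGraph.induce]; exact Finset.inter_eq_right.2 hU
  have hmapU : ∀ a ∈ F.verts, φ a ∈ U := by
    intro a ha
    have := hφ.1.1 (by exact_mod_cast ha)
    rw [hUverts] at this; exact_mod_cast this
  have hadj : ∀ a ∈ F.verts, ∀ b ∈ F.verts, (F.Adj a b ↔ H.Adj (φ a) (φ b)) := by
    intro a ha b hb
    rw [hφ.2 a ha b hb]
    simp only [NatGraph.induce]
    exact ⟨fun h => h.1, fun h => ⟨h, hmapU a ha, hmapU b hb⟩⟩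
  set w := H.verts.sup id + 1 with hw_def
  have hw : w ∉ H.verts := fresh_not_mem _
  set S : Finset ℕ := (F.verts.filter (fun a => F'.Adj v a)).image φ with hS_def
  have hSU : S ⊆ U := by
    intro x hx
    obtain ⟨a, ha, rfl⟩ := Finset.mem_image.1 hx
    exact hmapU a (Finset.mem_filter.1 ha).1
  have hSH : S ⊆ H.verts := hSU.trans hU
  refine ⟨hH, ⟨addVertex H w S hw hSH, ?_, ?_⟩⟩
  · refine ⟨w, hw, rfl, fun a ha b hb => ?_⟩
    have haw : a ≠ w := fun h => hw (h ▸ ha)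
    have hbw : b ≠ w := fun h => hw (h ▸ hb)
    simp [addVertex, haw, hbw]
  · -- the new graph is not in P
    intro hmem
    apply hF'P
    set K := addVertex H w S hw hSH with hK
    set em : ℕ → ℕ := fun a => if a = v then w else φ a with hem
    have hemv : em v = w := if_pos rfl
    have hemx : ∀ x ∈ F.verts, em x = φ x := by
      intro x hx
      exact if_neg (fun h => hv (by rw [← h]; exact hx))
    have hKverts : K.verts = insert w H.verts := rfl
    have hIverts : (K.induce (insert w U)).verts = insert w U := by
      simp only [NatGraph.induce, hKverts]
      exact Finset.inter_eq_right.2 (Finset.insert_subset_insert _ hU)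
    have hKAdj : ∀ X Y, K.Adj X Y ↔
        (H.Adj X Y ∨ (X = w ∧ Y ∈ S) ∨ (Y = w ∧ X ∈ S)) := fun X Y => Iff.rfl
    have hIAdj : ∀ X Y, (K.induce (insert w U)).Adj X Y ↔
        (K.Adj X Y ∧ X ∈ insert w U ∧ Y ∈ insert w U) := fun X Y => Iff.rfl
    have hφw : ∀ x ∈ F.verts, φ x ≠ w := by
      intro x hx h
      exact hw (h ▸ hU (hmapU x hx))
    refine hher _ F' hmem ⟨insert w U, Finset.insert_subset_insert _ hU, em, ?_, ?_⟩
    · rw [Set.BijOn]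
      refine ⟨?_, ?_, ?_⟩
      · intro x hx
        simp only [hFv, Finset.coe_insert, Set.mem_insert_iff, Finset.mem_coe] at hx
        rcases hx with rfl | hx
        · rw [hemv]
          rw [show ((K.induce (insert w U)).verts : Set ℕ) = (insert w U : Finset ℕ) from
            by rw [hIverts]]
          exact_mod_cast Finset.mem_insert_self _ _
        · rw [hemx x hx]
          rw [show ((K.induce (insert w U)).verts : Set ℕ) = (insert w U : Finset ℕ) from
            by rw [hIverts]]
          exact_mod_cast Finset.mem_insert_of_mem (hmapU x hx)
      · intro x hx y hy hxy
        simp only [hFv, Finset.coe_insert, Set.mem_insert_iff, Finset.mem_coe] at hx hy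
        rcases hx with rfl | hx <;> rcases hy with hyx | hy
        · exact hyx.symm
        · rw [hemv, hemx y hy] at hxy
          exact absurd hxy.symm (hφw y hy)
        · subst hyx
          rw [hemv, hemx x hx] at hxy
          exact absurd hxy (hφw x hx)
        · rw [hemx x hx, hemx y hy] at hxy
          exact hφ.1.2.1 (by exact_mod_cast hx) (by exact_mod_cast hy) hxy
      · intro y hy
        rw [show ((K.induce (insert w U)).verts : Set ℕ) = (insert w U : Finset ℕ) from
          by rw [hIverts]] at hy
        have hy' : y ∈ insert w U := by exact_mod_cast hy
        rcases Finset.mem_insert.1 hy' with rfl | hyU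
        · exact ⟨v, by simp [hFv], hemv⟩
        · obtain ⟨a, ha, rfl⟩ := hφ.1.2.2 (by rw [hUverts]; exact_mod_cast hyU)
          have haF : a ∈ F.verts := by exact_mod_cast ha
          exact ⟨a, by simp [hFv, haF], hemx a haF⟩
    · -- adjacency
      intro a ha b hb
      rw [hFv] at ha hb
      rcases Finset.mem_insert.1 ha with hav | haF <;>
        rcases Finset.mem_insert.1 hb with hbv | hbF
      · rw [hav, hbv]
        rw [hemv, hIAdj, hKAdj]
        constructor
        · intro h; exact absurd h (F'.loopless v)
        · rintro ⟨h | ⟨-, h⟩ | ⟨-, h⟩, -, -⟩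
          · exact absurd h (H.loopless w)
          · exact absurd (hSH h) hw
          · exact absurd (hSH h) hw
      · rw [hav]
        rw [hemv, hemx b hbF, hIAdj, hKAdj]
        constructor
        · intro h
          refine ⟨Or.inr (Or.inl ⟨rfl, ?_⟩), Finset.mem_insert_self _ _,
            Finset.mem_insert_of_mem (hmapU b hbF)⟩
          exact Finset.mem_image_of_mem φ (Finset.mem_filter.2 ⟨hbF, h⟩)
        · rintro ⟨h | ⟨-, h⟩ | ⟨h, -⟩, -, -⟩
          · exact absurd (H.mem_of_adj _ _ h).1 hw
          · obtain ⟨c, hc, hcb⟩ := Finset.mem_image.1 h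
            have hcb' : c = b := hφ.1.2.1 (by exact_mod_cast (Finset.mem_filter.1 hc).1)
              (by exact_mod_cast hbF) hcb
            exact hcb' ▸ (Finset.mem_filter.1 hc).2
          · exact absurd h (hφw b hbF)
      · rw [hbv]
        rw [hemv, hemx a haF, hIAdj, hKAdj]
        constructor
        · intro h
          refine ⟨Or.inr (Or.inr ⟨rfl, ?_⟩), Finset.mem_insert_of_mem (hmapU a haF),
            Finset.mem_insert_self _ _⟩
          exact Finset.mem_image_of_mem φ (Finset.mem_filter.2 ⟨haF, F'.symm _ _ h⟩)
        · rintro ⟨h | ⟨h, -⟩ | ⟨-, h⟩, -, -⟩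
          · exact absurd (H.mem_of_adj _ _ h).2 hw
          · exact absurd h (hφw a haF)
          · obtain ⟨c, hc, hca⟩ := Finset.mem_image.1 h
            have hca' : c = a := hφ.1.2.1 (by exact_mod_cast (Finset.mem_filter.1 hc).1)
              (by exact_mod_cast haF) hca
            exact F'.symm _ _ (hca' ▸ (Finset.mem_filter.1 hc).2)
      · rw [hemx a haF, hemx b hbF, hIAdj, hKAdj]
        rw [hadjF a haF b hbF, hadj a haF b hbF]
        constructor
        · intro h
          exact ⟨Or.inl h, Finset.mem_insert_of_mem (hmapU a haF),
            Finset.mem_insert_of_mem (hmapU b hbF)⟩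
        · rintro ⟨h | ⟨h, -⟩ | ⟨h, -⟩, -, -⟩
          · exact h
          · exact absurd h (hφw a haF)
          · exact absurd h (hφw b hbF)

/-! ### The big star-join construction -/

/-- Copy number `t` of the graph induced by `H` on `Vi`, realized on
`Nat.pair t '' Vi`. -/
def copyAt (H : NatGraph) (Vi : Finset ℕ) (t : ℕ) : NatGraph where
  verts := Vi.image (Nat.pair t)
  Adj X Y := ∃ u w, X = Nat.pair t u ∧ Y = Nat.pair t w ∧ u ∈ Vi ∧ w ∈ Vi ∧ H.Adj u w
  symm := by
    rintro a b ⟨u, w, rfl, rfl, hu, hw, h⟩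
    exact ⟨w, u, rfl, rfl, hw, hu, H.symm _ _ h⟩
  loopless := by
    rintro a ⟨u, w, rfl, h2, hu, hw, h⟩
    obtain ⟨-, rfl⟩ := Nat.pair_eq_pair.1 h2
    exact H.loopless _ h
  mem_of_adj := by
    rintro a b ⟨u, w, rfl, rfl, hu, hw, h⟩
    exact ⟨Finset.mem_image_of_mem _ hu, Finset.mem_image_of_mem _ hw⟩

lemma induce_verts_eq (H : NatGraph) {Vi : Finset ℕ} (h : Vi ⊆ H.verts) :
    (H.induce Vi).verts = Vi := by
  simp only [NatGraph.induce]; exact Finset.inter_eq_right.2 h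

lemma copyAt_iso (H : NatGraph) {Vi : Finset ℕ} (hVi : Vi ⊆ H.verts) (t : ℕ) :
    (copyAt H Vi t).Iso (H.induce Vi) := by
  refine ⟨fun X => (Nat.unpair X).2, ⟨?_, ?_, ?_⟩, ?_⟩
  · intro X hX
    obtain ⟨u, hu, rfl⟩ := Finset.mem_image.1 (by exact_mod_cast hX)
    rw [induce_verts_eq H hVi]
    simpa [Nat.unpair_pair] using hu
  · intro X hX Y hY hXY
    obtain ⟨u, hu, rfl⟩ := Finset.mem_image.1 (by exact_mod_cast hX)
    obtain ⟨w, hw, rfl⟩ := Finset.mem_image.1 (by exact_mod_cast hY)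
    simp only [Nat.unpair_pair] at hXY
    rw [hXY]
  · intro u hu
    rw [induce_verts_eq H hVi] at hu
    exact ⟨Nat.pair t u, by exact_mod_cast Finset.mem_image_of_mem _ (by exact_mod_cast hu),
      by simp [Nat.unpair_pair]⟩
  · intro X hX Y hY
    obtain ⟨u, hu, rfl⟩ := Finset.mem_image.1 hX
    obtain ⟨w, hw, rfl⟩ := Finset.mem_image.1 hY
    simp only [Nat.unpair_pair]
    constructor
    · rintro ⟨u', w', h1, h2, hu', hw', h⟩
      obtain ⟨-, rfl⟩ := Nat.pair_eq_pair.1 h1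
      obtain ⟨-, rfl⟩ := Nat.pair_eq_pair.1 h2
      exact ⟨h, hu', hw'⟩
    · rintro ⟨h, hu', hw'⟩
      exact ⟨u, w, rfl, rfl, hu', hw', h⟩

/-- The disjoint union of `k` copies of `H.induce Vi`. -/
def bigPart (H : NatGraph) (k : ℕ) (Vi : Finset ℕ) : NatGraph where
  verts := (Finset.range k).biUnion (fun t => Vi.image (Nat.pair t))
  Adj X Y := ∃ t u w, t < k ∧ X = Nat.pair t u ∧ Y = Nat.pair t w ∧
    u ∈ Vi ∧ w ∈ Vi ∧ H.Adj u w
  symm := by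
    rintro a b ⟨t, u, w, ht, rfl, rfl, hu, hw, h⟩
    exact ⟨t, w, u, ht, rfl, rfl, hw, hu, H.symm _ _ h⟩
  loopless := by
    rintro a ⟨t, u, w, ht, rfl, h2, hu, hw, h⟩
    obtain ⟨-, rfl⟩ := Nat.pair_eq_pair.1 h2
    exact H.loopless _ h
  mem_of_adj := by
    rintro a b ⟨t, u, w, ht, rfl, rfl, hu, hw, h⟩
    exact ⟨Finset.mem_biUnion.2 ⟨t, Finset.mem_range.2 ht, Finset.mem_image_of_mem _ hu⟩,
      Finset.mem_biUnion.2 ⟨t, Finset.mem_range.2 ht, Finset.mem_image_of_mem _ hw⟩⟩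

lemma mem_bigPart_verts {H : NatGraph} {k : ℕ} {Vi : Finset ℕ} {X : ℕ} :
    X ∈ (bigPart H k Vi).verts ↔ ∃ t < k, ∃ u ∈ Vi, X = Nat.pair t u := by
  simp only [bigPart, Finset.mem_biUnion, Finset.mem_range, Finset.mem_image]
  constructor
  · rintro ⟨t, ht, u, hu, rfl⟩; exact ⟨t, ht, u, hu, rfl⟩
  · rintro ⟨t, ht, u, hu, rfl⟩; exact ⟨t, ht, u, hu, rfl⟩

lemma bigPart_mem_kCopies (H : NatGraph) {Vi : Finset ℕ} (hVi : Vi ⊆ H.verts) (k : ℕ) :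
    bigPart H k Vi ∈ kCopies k (H.induce Vi) := by
  refine ⟨fun t : Fin k => copyAt H Vi t, fun t => copyAt_iso H hVi t, ?_, ?_, ?_⟩
  · intro i j hij
    simp only [copyAt, Finset.disjoint_left]
    intro X hX hX'
    obtain ⟨u, hu, rfl⟩ := Finset.mem_image.1 hX
    obtain ⟨w, hw, h⟩ := Finset.mem_image.1 hX'
    exact hij (Fin.ext (Nat.pair_eq_pair.1 h.symm).1.symm.symm)
  · ext X
    simp only [bigPart, copyAt, Finset.mem_biUnion, Finset.mem_range, Finset.mem_univ,
      true_and]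
    constructor
    · rintro ⟨t, ht, h⟩; exact ⟨⟨t, ht⟩, h⟩
    · rintro ⟨t, h⟩; exact ⟨t, t.isLt, h⟩
  · intro a b
    simp only [bigPart, copyAt]
    constructor
    · rintro ⟨t, u, w, ht, rfl, rfl, hu, hw, h⟩
      exact ⟨⟨t, ht⟩, u, w, rfl, rfl, hu, hw, h⟩
    · rintro ⟨t, u, w, h1, h2, hu, hw, h⟩
      exact ⟨t, u, w, t.isLt, h1, h2, hu, hw, h⟩

lemma bigPart_disjoint {H : NatGraph} {k : ℕ} {Vi Vj : Finset ℕ} (h : Disjoint Vi Vj) :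
    Disjoint (bigPart H k Vi).verts (bigPart H k Vj).verts := by
  rw [Finset.disjoint_left]
  intro X hX hX'
  obtain ⟨t, ht, u, hu, rfl⟩ := mem_bigPart_verts.1 hX
  obtain ⟨t', ht', u', hu', heq⟩ := mem_bigPart_verts.1 hX'
  obtain ⟨-, rfl⟩ := Nat.pair_eq_pair.1 heq
  exact Finset.disjoint_left.1 h hu hu'

/-- The big graph: star-join of the `bigPart`s with cross edges given by `R`. -/
def bigGraph (H : NatGraph) (k : ℕ) {n : ℕ} (V : Fin n → Finset ℕ)
    (R : ℕ → ℕ → Prop) : NatGraph where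
  verts := Finset.univ.biUnion (fun i => (bigPart H k (V i)).verts)
  Adj X Y := (∃ i, (bigPart H k (V i)).Adj X Y) ∨
    (X ∈ Finset.univ.biUnion (fun i => (bigPart H k (V i)).verts) ∧
     Y ∈ Finset.univ.biUnion (fun i => (bigPart H k (V i)).verts) ∧
     X ≠ Y ∧ (R X Y ∨ R Y X))
  symm := by
    rintro a b (⟨i, h⟩ | ⟨h1, h2, h3, h4⟩)
    · exact Or.inl ⟨i, (bigPart H k (V i)).symm a b h⟩
    · exact Or.inr ⟨h2, h1, h3.symm, h4.symm⟩
  loopless := by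
    rintro a (⟨i, h⟩ | ⟨-, -, h3, -⟩)
    · exact (bigPart H k (V i)).loopless a h
    · exact h3 rfl
  mem_of_adj := by
    rintro a b (⟨i, h⟩ | ⟨h1, h2, -, -⟩)
    · exact ⟨Finset.mem_biUnion.2 ⟨i, Finset.mem_univ i, ((bigPart H k (V i)).mem_of_adj a b h).1⟩,
        Finset.mem_biUnion.2 ⟨i, Finset.mem_univ i, ((bigPart H k (V i)).mem_of_adj a b h).2⟩⟩
    · exact ⟨h1, h2⟩

lemma bigGraph_mem_starJoin {H : NatGraph} {k : ℕ} {n : ℕ} {V : Fin n → Finset ℕ}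
    {R : ℕ → ℕ → Prop}
    (hdisjV : ∀ i j, i ≠ j → Disjoint (V i) (V j))
    (hR : ∀ X Y, R X Y ∨ R Y X → ∀ i, X ∈ (bigPart H k (V i)).verts →
      Y ∈ (bigPart H k (V i)).verts → (bigPart H k (V i)).Adj X Y) :
    bigGraph H k V R ∈ StarJoin (fun i => bigPart H k (V i)) := by
  refine ⟨rfl, ?_⟩
  intro i X hX Y hY
  constructor
  · rintro (⟨j, hadj⟩ | ⟨-, -, -, h4⟩)
    · -- adjacency inside part j forces j = i
      obtain ⟨t, u, w, ht, rfl, rfl, hu, hw, h⟩ := hadj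
      obtain ⟨t', ht', u', hu', heq⟩ := mem_bigPart_verts.1 hX
      obtain ⟨-, rfl⟩ := Nat.pair_eq_pair.1 heq
      by_cases hij : j = i
      · subst hij; exact ⟨t, u, w, ht, rfl, rfl, hu, hw, h⟩
      · exact absurd hu' (Finset.disjoint_left.1 (hdisjV j i hij) hu)
    · exact hR X Y h4 i hX hY
  · intro h
    exact Or.inl ⟨i, h⟩

lemma bigGraph_mem_prop {P : Set NatGraph} {H : NatGraph} {n : ℕ} {V : Fin n → Finset ℕ}
    (hdec : IsDecomp P H V) {k : ℕ} (hk : 0 < k) {R : ℕ → ℕ → Prop}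
    (hR : ∀ X Y, R X Y ∨ R Y X → ∀ i, X ∈ (bigPart H k (V i)).verts →
      Y ∈ (bigPart H k (V i)).verts → (bigPart H k (V i)).Adj X Y) :
    bigGraph H k V R ∈ P := by
  have hVsub : ∀ i, V i ⊆ H.verts := by
    intro i x hx
    rw [← hdec.2.2.1]
    exact Finset.mem_biUnion.2 ⟨i, Finset.mem_univ i, hx⟩
  refine hdec.2.2.2 k hk (fun i => bigPart H k (V i))
    (fun i => bigPart_mem_kCopies H (hVsub i) k)
    (fun i j hij => bigPart_disjoint (hdec.2.1 i j hij))
    _ (bigGraph_mem_starJoin hdec.2.1 hR)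

/-- Master lemma: any graph that embeds "compatibly" into the big star-join
over a `P`-decomposition of `H` belongs to `P`. -/
lemma decomp_absorb {P : Set NatGraph} (hher : IndHer P) {H : NatGraph} {n : ℕ}
    {V : Fin n → Finset ℕ} (hdec : IsDecomp P H V) {k : ℕ} (hk : 0 < k)
    (Z : NatGraph) (g : ℕ → ℕ)
    (hinj : Set.InjOn g (Z.verts : Set ℕ))
    (hmap : ∀ x ∈ Z.verts, ∃ t, t < k ∧ ∃ i : Fin n, ∃ u ∈ V i, g x = Nat.pair t u)
    (hadj : ∀ x ∈ Z.verts, ∀ y ∈ Z.verts, ∀ t t' u u' (i : Fin n),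
      g x = Nat.pair t u → g y = Nat.pair t' u' → u ∈ V i → u' ∈ V i →
      (Z.Adj x y ↔ (t = t' ∧ H.Adj u u'))) :
    Z ∈ P := by
  classical
  set R : ℕ → ℕ → Prop := fun X Y =>
    ∃ x, x ∈ Z.verts ∧ ∃ y, y ∈ Z.verts ∧ X = g x ∧ Y = g y ∧ Z.Adj x y with hR_def
  have hRsymm : ∀ X Y, R X Y → R Y X := by
    rintro X Y ⟨x, hx, y, hy, rfl, rfl, h⟩
    exact ⟨y, hy, x, hx, rfl, rfl, Z.symm _ _ h⟩
  have hRone : ∀ X Y, R X Y → ∀ i, X ∈ (bigPart H k (V i)).verts →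
      Y ∈ (bigPart H k (V i)).verts → (bigPart H k (V i)).Adj X Y := by
    rintro X Y ⟨x, hx, y, hy, rfl, rfl, hZ⟩ i hXv hYv
    obtain ⟨s, hs, u1, hu1, heq1⟩ := mem_bigPart_verts.1 hXv
    obtain ⟨s', hs', u1', hu1', heq1'⟩ := mem_bigPart_verts.1 hYv
    have := (hadj x hx y hy s s' u1 u1' i heq1 heq1' hu1 hu1').1 hZ
    exact ⟨s, u1, u1', hs, heq1, by rw [this.1]; exact heq1', hu1, hu1', this.2⟩
  have hR : ∀ X Y, R X Y ∨ R Y X → ∀ i, X ∈ (bigPart H k (V i)).verts →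
      Y ∈ (bigPart H k (V i)).verts → (bigPart H k (V i)).Adj X Y := by
    rintro X Y (h | h) i hX hY
    · exact hRone X Y h i hX hY
    · exact (bigPart H k (V i)).symm _ _ (hRone Y X h i hY hX)
  have hbig : bigGraph H k V R ∈ P := bigGraph_mem_prop hdec hk hR
  -- now embed Z into the big graph
  have hgmem : ∀ x ∈ Z.verts, g x ∈ (bigGraph H k V R).verts := by
    intro x hx
    obtain ⟨t, ht, i, u, hu, heq⟩ := hmap x hx
    exact Finset.mem_biUnion.2 ⟨i, Finset.mem_univ i,
      mem_bigPart_verts.2 ⟨t, ht, u, hu, heq⟩⟩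
  refine hher _ Z hbig ⟨Z.verts.image g, ?_, g, ?_, ?_⟩
  · intro X hX
    obtain ⟨x, hx, rfl⟩ := Finset.mem_image.1 hX
    exact hgmem x hx
  · have hIverts : ((bigGraph H k V R).induce (Z.verts.image g)).verts
        = Z.verts.image g := by
      apply induce_verts_eq
      intro X hX
      obtain ⟨x, hx, rfl⟩ := Finset.mem_image.1 hX
      exact hgmem x hx
    refine ⟨?_, hinj, ?_⟩
    · intro x hx
      rw [show (((bigGraph H k V R).induce (Z.verts.image g)).verts : Set ℕ)
          = (Z.verts.image g : Finset ℕ) from by rw [hIverts]]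
      exact_mod_cast Finset.mem_image_of_mem g (by exact_mod_cast hx)
    · intro X hX
      rw [show (((bigGraph H k V R).induce (Z.verts.image g)).verts : Set ℕ)
          = (Z.verts.image g : Finset ℕ) from by rw [hIverts]] at hX
      obtain ⟨x, hx, rfl⟩ := Finset.mem_image.1 (by exact_mod_cast hX)
      exact ⟨x, by exact_mod_cast hx, rfl⟩
  · intro x hx y hy
    have hIAdj : ∀ X Y, ((bigGraph H k V R).induce (Z.verts.image g)).Adj X Y ↔
        ((bigGraph H k V R).Adj X Y ∧ X ∈ Z.verts.image g ∧ Y ∈ Z.verts.image g) :=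
      fun X Y => Iff.rfl
    rw [hIAdj]
    constructor
    · intro hZxy
      have hxy : x ≠ y := fun h => Z.loopless x (h ▸ hZxy)
      have hgxy : g x ≠ g y := fun h => hxy (hinj (by exact_mod_cast hx)
        (by exact_mod_cast hy) h)
      exact ⟨Or.inr ⟨hgmem x hx, hgmem y hy, hgxy,
          Or.inl ⟨x, hx, y, hy, rfl, rfl, hZxy⟩⟩,
        Finset.mem_image_of_mem g hx, Finset.mem_image_of_mem g hy⟩
    · rintro ⟨hbigAdj | ⟨-, -, -, (h | h)⟩, -, -⟩
      · obtain ⟨i, t, u, w, ht, heqx, heqy, hu, hw, hH⟩ := hbigAdj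
        exact (hadj x hx y hy t t u w i heqx heqy hu hw).2 ⟨rfl, hH⟩
      · obtain ⟨x', hx', y', hy', heq1, heq2, hZ'⟩ := h
        rwa [hinj (by exact_mod_cast hx') (by exact_mod_cast hx) heq1.symm,
          hinj (by exact_mod_cast hy') (by exact_mod_cast hy) heq2.symm] at hZ'
      · obtain ⟨y', hy', x', hx', heq1, heq2, hZ'⟩ := h
        rw [hinj (by exact_mod_cast hy') (by exact_mod_cast hy) heq1.symm,
          hinj (by exact_mod_cast hx') (by exact_mod_cast hx) heq2.symm] at hZ'
        exact Z.symm _ _ hZ'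

open Classical in
/-- Transfer of a `P`-decomposition from `H` down to a `P`-strict `F ≤ H`. -/
lemma decomp_transfer_s6 {P : Set NatGraph} (hher : IndHer P) {F H : NatGraph} (hF : Strict P F)
    {U : Finset ℕ} (hU : U ⊆ H.verts) {φ : ℕ → ℕ} (hφ : F.IsoVia (H.induce U) φ)
    {n : ℕ} {V : Fin n → Finset ℕ} (hdec : IsDecomp P H V) :
    IsDecomp P F (fun i => F.verts.filter (fun a => φ a ∈ V i)) := by
  classical
  set W : Fin n → Finset ℕ := fun i => F.verts.filter (fun a => φ a ∈ V i) with hW_def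
  have hmemW : ∀ i a, a ∈ W i ↔ (a ∈ F.verts ∧ φ a ∈ V i) := by
    intro i a; simp [hW_def]
  have hWsub : ∀ i, W i ⊆ F.verts := fun i a ha => ((hmemW i a).1 ha).1
  have hUverts : (H.induce U).verts = U := induce_verts_eq H hU
  have hmapU : ∀ a ∈ F.verts, φ a ∈ U := by
    intro a ha
    have := hφ.1.1 (by exact_mod_cast ha)
    rw [hUverts] at this; exact_mod_cast this
  have hadjFH : ∀ a ∈ F.verts, ∀ b ∈ F.verts, (F.Adj a b ↔ H.Adj (φ a) (φ b)) := by
    intro a ha b hb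
    rw [hφ.2 a ha b hb]
    simp only [NatGraph.induce]
    exact ⟨fun h => h.1, fun h => ⟨h, hmapU a ha, hmapU b hb⟩⟩
  have hφinj := hφ.1.2.1
  have hdisjV := hdec.2.1
  have hVun := hdec.2.2.1
  have huniqV : ∀ (u : ℕ) (i j : Fin n), u ∈ V i → u ∈ V j → i = j := by
    intro u i j hi hj
    by_contra hij
    exact Finset.disjoint_left.1 (hdisjV i j hij) hi hj
  have hφmemV : ∀ a ∈ F.verts, ∃ i, φ a ∈ V i := by
    intro a ha
    have : φ a ∈ H.verts := hU (hmapU a ha)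
    rw [← hVun] at this
    obtain ⟨i, -, hi⟩ := Finset.mem_biUnion.1 this
    exact ⟨i, hi⟩
  refine ⟨?_, ?_, ?_, ?_⟩
  · -- nonempty parts, using strictness
    intro i₀
    rw [Finset.nonempty_iff_ne_empty]
    intro hempty
    have hnone : ∀ a ∈ F.verts, φ a ∉ V i₀ := by
      intro a ha hmem
      have : a ∈ W i₀ := (hmemW i₀ a).2 ⟨ha, hmem⟩
      rw [hempty] at this
      exact absurd this (Finset.notMem_empty a)
    obtain ⟨hFP, F', ⟨v, hv, hFv, hadjF⟩, hF'P⟩ := hF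
    obtain ⟨u₀, hu₀⟩ := hdec.1 i₀
    apply hF'P
    set g : ℕ → ℕ := fun a => if a = v then Nat.pair 1 u₀ else Nat.pair 0 (φ a) with hg_def
    have hg1 : g v = Nat.pair 1 u₀ := if_pos rfl
    have hg2 : ∀ x ∈ F.verts, g x = Nat.pair 0 (φ x) := by
      intro x hxF
      exact if_neg (fun h => hv (by rw [← h]; exact hxF))
    refine decomp_absorb hher hdec (k := 2) (by norm_num) F' g ?_ ?_ ?_
    · intro x hx y hy hxy
      rw [hFv] at hx hy
      simp only [Finset.coe_insert, Set.mem_insert_iff, Finset.mem_coe] at hx hy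
      rcases hx with rfl | hx <;> rcases hy with hyx | hy
      · exact hyx.symm
      · rw [hg1, hg2 y hy] at hxy
        exact absurd (Nat.pair_eq_pair.1 hxy).1 one_ne_zero
      · rw [hyx, hg1, hg2 x hx] at hxy
        exact absurd (Nat.pair_eq_pair.1 hxy).1 zero_ne_one
      · rw [hg2 x hx, hg2 y hy] at hxy
        exact hφinj (by exact_mod_cast hx) (by exact_mod_cast hy)
          (Nat.pair_eq_pair.1 hxy).2
    · intro x hx
      rw [hFv] at hx
      rcases Finset.mem_insert.1 hx with hxv | hxF
      · exact ⟨1, by norm_num, i₀, u₀, hu₀, by rw [hxv, hg1]⟩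
      · obtain ⟨i, hi⟩ := hφmemV x hxF
        exact ⟨0, by norm_num, i, φ x, hi, hg2 x hxF⟩
    · intro x hx y hy t t' u u' j hgx hgy huj huj'
      rw [hFv] at hx hy
      rcases Finset.mem_insert.1 hx with hxv | hxF <;>
        rcases Finset.mem_insert.1 hy with hyv | hyF
      · rw [hxv, hg1] at hgx
        rw [hyv, hg1] at hgy
        obtain ⟨-, hu⟩ := Nat.pair_eq_pair.1 hgx
        obtain ⟨-, hu'⟩ := Nat.pair_eq_pair.1 hgy
        rw [hxv, hyv]
        constructor
        · intro h; exact absurd h (F'.loopless v)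
        · rintro ⟨-, h⟩
          rw [← hu, ← hu'] at h
          exact absurd h (H.loopless u₀)
      · exfalso
        rw [hxv, hg1] at hgx
        rw [hg2 y hyF] at hgy
        obtain ⟨-, hu⟩ := Nat.pair_eq_pair.1 hgx
        obtain ⟨-, hu'⟩ := Nat.pair_eq_pair.1 hgy
        rw [← hu] at huj
        have hji : j = i₀ := huniqV u₀ j i₀ huj hu₀
        rw [← hu'] at huj'
        exact hnone y hyF (hji ▸ huj')
      · exfalso
        rw [hyv, hg1] at hgy
        rw [hg2 x hxF] at hgx
        obtain ⟨-, hu'⟩ := Nat.pair_eq_pair.1 hgy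
        obtain ⟨-, hu⟩ := Nat.pair_eq_pair.1 hgx
        rw [← hu'] at huj'
        have hji : j = i₀ := huniqV u₀ j i₀ huj' hu₀
        rw [← hu] at huj
        exact hnone x hxF (hji ▸ huj)
      · rw [hg2 x hxF] at hgx
        rw [hg2 y hyF] at hgy
        obtain ⟨rfl, rfl⟩ := Nat.pair_eq_pair.1 hgx.symm
        obtain ⟨rfl, rfl⟩ := Nat.pair_eq_pair.1 hgy.symm
        rw [hadjF x hxF y hyF, hadjFH x hxF y hyF]
        exact ⟨fun h => ⟨rfl, h⟩, fun h => h.2⟩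
  · -- disjointness
    intro i j hij
    rw [Finset.disjoint_left]
    intro a hai haj
    exact Finset.disjoint_left.1 (hdisjV i j hij) ((hmemW i a).1 hai).2 ((hmemW j a).1 haj).2
  · -- union
    ext a
    rw [Finset.mem_biUnion]
    constructor
    · rintro ⟨i, -, hi⟩; exact ((hmemW i a).1 hi).1
    · intro ha
      obtain ⟨i, hi⟩ := hφmemV a ha
      exact ⟨i, Finset.mem_univ i, (hmemW i a).2 ⟨ha, hi⟩⟩
  · -- the k-copies condition
    intro k hk A hA hdisjA Hstar hHstar
    have hA' : ∀ i, ∃ C : Fin k → NatGraph,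
        (∀ t, (C t).Iso (F.induce (W i))) ∧ IsDisjUnion (A i) C := hA
    choose C hCiso hCdu using hA'
    choose ψ hψ using fun i t => hCiso i t
    have hWverts : ∀ i, (F.induce (W i)).verts = W i := fun i => induce_verts_eq F (hWsub i)
    have hψmem : ∀ (i : Fin n) (t : Fin k), ∀ x ∈ (C i t).verts, ψ i t x ∈ W i := by
      intro i t x hx
      have := (hψ i t).1.1 (by exact_mod_cast hx)
      rw [hWverts i] at this; exact_mod_cast this
    have hψF : ∀ (i : Fin n) (t : Fin k), ∀ x ∈ (C i t).verts, ψ i t x ∈ F.verts :=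
      fun i t x hx => hWsub i (hψmem i t x hx)
    have hψV : ∀ (i : Fin n) (t : Fin k), ∀ x ∈ (C i t).verts, φ (ψ i t x) ∈ V i :=
      fun i t x hx => ((hmemW i _).1 (hψmem i t x hx)).2
    have hCsub : ∀ (i : Fin n) (t : Fin k), (C i t).verts ⊆ (A i).verts := by
      intro i t x hx
      rw [(hCdu i).2.1]
      exact Finset.mem_biUnion.2 ⟨t, Finset.mem_univ t, hx⟩
    have huniqC : ∀ (x : ℕ) (i : Fin n) (t : Fin k) (i' : Fin n) (t' : Fin k),
        x ∈ (C i t).verts → x ∈ (C i' t').verts → i = i' ∧ t = t' := by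
      intro x i t i' t' hx hx'
      have hii' : i = i' := by
        by_contra hne
        exact Finset.disjoint_left.1 (hdisjA i i' hne) (hCsub i t hx) (hCsub i' t' hx')
      subst hii'
      refine ⟨rfl, ?_⟩
      by_contra hne
      exact Finset.disjoint_left.1 ((hCdu i).1 t t' hne) hx hx'
    set em : ℕ → ℕ := fun x =>
      if h : ∃ p : Fin n × Fin k, x ∈ (C p.1 p.2).verts then
        Nat.pair (h.choose.2 : ℕ) (φ (ψ h.choose.1 h.choose.2 x)) else 0 with hem_def
    have hem : ∀ (i : Fin n) (t : Fin k), ∀ x ∈ (C i t).verts,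
        em x = Nat.pair (t : ℕ) (φ (ψ i t x)) := by
      intro i t x hx
      have hex : ∃ p : Fin n × Fin k, x ∈ (C p.1 p.2).verts := ⟨(i, t), hx⟩
      rw [hem_def]
      simp only [dif_pos hex]
      obtain ⟨h1, h2⟩ := huniqC x hex.choose.1 hex.choose.2 i t hex.choose_spec hx
      rw [h1, h2]
    have hxloc : ∀ x ∈ Hstar.verts, ∃ (i : Fin n) (t : Fin k), x ∈ (C i t).verts := by
      intro x hx
      rw [hHstar.1] at hx
      obtain ⟨i, -, hxi⟩ := Finset.mem_biUnion.1 hx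
      rw [(hCdu i).2.1] at hxi
      obtain ⟨t, -, hxt⟩ := Finset.mem_biUnion.1 hxi
      exact ⟨i, t, hxt⟩
    refine decomp_absorb hher hdec hk Hstar em ?_ ?_ ?_
    · -- injectivity
      intro x hx y hy hxy
      obtain ⟨i, t, hxC⟩ := hxloc x (by exact_mod_cast hx)
      obtain ⟨i', t', hyC⟩ := hxloc y (by exact_mod_cast hy)
      rw [hem i t x hxC, hem i' t' y hyC] at hxy
      obtain ⟨h1, h2⟩ := Nat.pair_eq_pair.1 hxy
      have hii' : i = i' := huniqV _ i i' (hψV i t x hxC) (by rw [h2]; exact hψV i' t' y hyC)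
      subst hii'
      have htt' : t = t' := Fin.ext h1
      subst htt'
      have hψeq : ψ i t x = ψ i t y :=
        hφinj (by exact_mod_cast hψF i t x hxC) (by exact_mod_cast hψF i t y hyC) h2
      exact (hψ i t).1.2.1 (by exact_mod_cast hxC) (by exact_mod_cast hyC) hψeq
    · -- mapping
      intro x hx
      obtain ⟨i, t, hxC⟩ := hxloc x hx
      exact ⟨t, t.isLt, i, φ (ψ i t x), hψV i t x hxC, hem i t x hxC⟩
    · -- adjacency
      intro x hx y hy t t' u u' j hgx hgy huj huj'
      obtain ⟨i, s, hxC⟩ := hxloc x hx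
      obtain ⟨i', s', hyC⟩ := hxloc y hy
      rw [hem i s x hxC] at hgx
      rw [hem i' s' y hyC] at hgy
      obtain ⟨rfl, rfl⟩ := Nat.pair_eq_pair.1 hgx.symm
      obtain ⟨rfl, rfl⟩ := Nat.pair_eq_pair.1 hgy.symm
      have hij : i = j := huniqV _ i j (hψV i s x hxC) huj
      have hij' : i' = j := huniqV _ i' j (hψV i' s' y hyC) huj'
      cases hij
      cases hij'
      have hstar2 := hHstar.2 j x (hCsub j s hxC) y (hCsub j s' hyC)
      rw [hstar2, (hCdu j).2.2]
      constructor
      · rintro ⟨τ, hτ⟩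
        have hmem := (C j τ).mem_of_adj x y hτ
        obtain ⟨-, hts⟩ := huniqC x j τ j s hmem.1 hxC
        obtain ⟨-, hts'⟩ := huniqC y j τ j s' hmem.2 hyC
        cases hts
        cases hts'
        refine ⟨rfl, ?_⟩
        have hadj2 := ((hψ j s).2 x (by exact_mod_cast hxC) y (by exact_mod_cast hyC)).1 hτ
        have hFadj : F.Adj (ψ j s x) (ψ j s y) := hadj2.1
        exact (hadjFH _ (hψF j s x hxC) _ (hψF j s y hyC)).1 hFadj
      · rintro ⟨hss, hHadj⟩
        have hss' : s = s' := Fin.ext hss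
        cases hss'
        refine ⟨s, ?_⟩
        have hFadj : F.Adj (ψ j s x) (ψ j s y) :=
          (hadjFH _ (hψF j s x hxC) _ (hψF j s y hyC)).2 hHadj
        exact ((hψ j s).2 x (by exact_mod_cast hxC) y (by exact_mod_cast hyC)).2
          ⟨hFadj, hψmem j s x hxC, hψmem j s y hyC⟩

lemma decomp_le_card {P : Set NatGraph} {G : NatGraph} {n : ℕ} {V : Fin n → Finset ℕ}
    (h : IsDecomp P G V) : n ≤ G.verts.card := by
  have hcard : G.verts.card = ∑ i : Fin n, (V i).card := by
    rw [← h.2.2.1]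
    exact Finset.card_biUnion (fun i _ j _ hij => h.2.1 i j hij)
  calc n = ∑ _i : Fin n, 1 := by simp
    _ ≤ ∑ i : Fin n, (V i).card :=
        Finset.sum_le_sum (fun i _ => (h.1 i).card_pos)
    _ = G.verts.card := hcard.symm

lemma bddAbove_decompSet (P : Set NatGraph) (G : NatGraph) :
    BddAbove {n | ∃ V : Fin n → Finset ℕ, IsDecomp P G V} := by
  refine ⟨G.verts.card, fun n hn => ?_⟩
  obtain ⟨V, hV⟩ := hn
  exact decomp_le_card hV

lemma decP_le_of_strict_le {P : Set NatGraph} (hher : IndHer P) {F H : NatGraph}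
    (hF : Strict P F) (hFH : F.Le H) : decP P H ≤ decP P F := by
  classical
  obtain ⟨U, hU, φ, hφ⟩ := hFH
  have hsub : {n | ∃ V : Fin n → Finset ℕ, IsDecomp P H V} ⊆
      {n | ∃ W : Fin n → Finset ℕ, IsDecomp P F W} := by
    rintro n ⟨V, hV⟩
    exact ⟨_, decomp_transfer_s6 hher hF hU hφ hV⟩
  by_cases hne : {n | ∃ V : Fin n → Finset ℕ, IsDecomp P H V}.Nonempty
  · have h1 : decP P H ∈ {n | ∃ V : Fin n → Finset ℕ, IsDecomp P H V} :=
      Nat.sSup_mem hne (bddAbove_decompSet P H)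
    exact le_csSup (bddAbove_decompSet P F) (hsub h1)
  · rw [Set.not_nonempty_iff_eq_empty] at hne
    rw [decP, hne, csSup_empty]
    exact Nat.zero_le _

/-- If `P` is a property that is not the class of all graphs, some graph
is `P`-strict. -/
lemma exists_strict {P : Set NatGraph} (hprop : IsProperty P) (hne : P ≠ Set.univ) :
    ∃ F, Strict P F := by
  classical
  have hex : ∃ X : NatGraph, X ∉ P := by
    by_contra h
    push_neg at h
    exact hne (Set.eq_univ_of_forall h)
  set S : Set ℕ := {m | ∃ X : NatGraph, X ∉ P ∧ X.verts.card = m} with hS_def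
  have hSne : S.Nonempty := by
    obtain ⟨X, hX⟩ := hex
    exact ⟨X.verts.card, X, hX, rfl⟩
  obtain ⟨Y, hYP, hYcard⟩ := Nat.sInf_mem hSne
  have hmin : ∀ Z : NatGraph, Z.verts.card < sInf S → Z ∈ P := by
    intro Z hZ
    by_contra hZP
    have hle : sInf S ≤ Z.verts.card := Nat.sInf_le (show Z.verts.card ∈ S from ⟨Z, hZP, rfl⟩)
    omega
  have hY0 : Y.verts.Nonempty := by
    rw [Finset.nonempty_iff_ne_empty]
    intro hYv
    apply hYP
    apply hprop.2.2 nullGraph Y _ hprop.1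
    refine ⟨id, ?_, ?_⟩
    · constructor
      · intro x hx; exact absurd hx (by simp [nullGraph])
      · constructor
        · intro x hx; exact absurd hx (by simp [nullGraph])
        · intro x hx
          rw [hYv] at hx
          exact absurd hx (by simp)
    · intro a ha
      exact absurd ha (by simp [nullGraph])
  obtain ⟨v, hv⟩ := hY0
  set F := Y.induce (Y.verts.erase v) with hF_def
  have hFverts : F.verts = Y.verts.erase v := by
    rw [hF_def]
    exact induce_verts_eq Y (Finset.erase_subset v Y.verts)
  have hFP : F ∈ P := by
    apply hmin
    rw [hFverts, ← hYcard]
    exact Finset.card_erase_lt_of_mem hv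
  refine ⟨F, hFP, Y, ⟨v, ?_, ?_, ?_⟩, hYP⟩
  · rw [hFverts]; exact Finset.notMem_erase v Y.verts
  · rw [hFverts, Finset.insert_erase hv]
  · intro a ha b hb
    rw [hFverts] at ha hb
    rw [hF_def]
    simp only [NatGraph.induce]
    exact ⟨fun h => ⟨h, ha, hb⟩, fun h => h.1⟩

/-- Shifting a graph by `N`. -/
def shiftGraph (F : NatGraph) (N : ℕ) : NatGraph where
  verts := F.verts.image (· + N)
  Adj X Y := ∃ a b, F.Adj a b ∧ X = a + N ∧ Y = b + N
  symm := by
    rintro x y ⟨a, b, h, rfl, rfl⟩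
    exact ⟨b, a, F.symm a b h, rfl, rfl⟩
  loopless := by
    rintro x ⟨a, b, h, rfl, hab⟩
    have : a = b := by omega
    exact F.loopless a (this ▸ h)
  mem_of_adj := by
    rintro x y ⟨a, b, h, rfl, rfl⟩
    exact ⟨Finset.mem_image_of_mem _ (F.mem_of_adj a b h).1,
      Finset.mem_image_of_mem _ (F.mem_of_adj a b h).2⟩

lemma shift_iso (F : NatGraph) (N : ℕ) : F.IsoVia (shiftGraph F N) (· + N) := by
  constructor
  · refine ⟨?_, ?_, ?_⟩
    · intro a ha
      exact_mod_cast Finset.mem_image_of_mem _ (by exact_mod_cast ha)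
    · intro a _ b _ h
      have h2 : a + N = b + N := h
      omega
    · intro x hx
      obtain ⟨a, ha, rfl⟩ := Finset.mem_image.1 (by exact_mod_cast hx)
      exact ⟨a, by exact_mod_cast ha, rfl⟩
  · intro a ha b hb
    constructor
    · intro h; exact ⟨a, b, h, rfl, rfl⟩
    · rintro ⟨a', b', h, ha', hb'⟩
      have ha2 : a + N = a' + N := ha'
      have hb3 : b + N = b' + N := hb'
      have h4 : a' = a := by omega
      have h5 : b' = b := by omega
      rw [← h4, ← h5]
      exact h

/-- The disjoint union of two graphs. -/
def unionGraph (G F : NatGraph) : NatGraph where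
  verts := G.verts ∪ F.verts
  Adj a b := G.Adj a b ∨ F.Adj a b
  symm := by
    rintro a b (h | h)
    · exact Or.inl (G.symm a b h)
    · exact Or.inr (F.symm a b h)
  loopless := by
    rintro a (h | h)
    · exact G.loopless a h
    · exact F.loopless a h
  mem_of_adj := by
    rintro a b (h | h)
    · exact ⟨Finset.mem_union_left _ (G.mem_of_adj a b h).1,
        Finset.mem_union_left _ (G.mem_of_adj a b h).2⟩
    · exact ⟨Finset.mem_union_right _ (F.mem_of_adj a b h).1,
        Finset.mem_union_right _ (F.mem_of_adj a b h).2⟩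

lemma unionGraph_isDisjUnion {G F : NatGraph} (hdisj : Disjoint G.verts F.verts) :
    IsDisjUnion (unionGraph G F) ![G, F] := by
  refine ⟨?_, ?_, ?_⟩
  · intro i j hij
    fin_cases i <;> fin_cases j <;> simp_all <;>
      first
        | exact hdisj
        | exact hdisj.symm
  · ext a
    simp [unionGraph, Fin.exists_fin_two]
  · intro a b
    simp only [unionGraph]
    rw [Fin.exists_fin_two]
    simp

lemma le_unionGraph_left {G F : NatGraph} (hdisj : Disjoint G.verts F.verts) :
    G.Le (unionGraph G F) := by
  refine ⟨G.verts, Finset.subset_union_left, id, ?_, ?_⟩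
  · have hverts : ((unionGraph G F).induce G.verts).verts = G.verts :=
      induce_verts_eq _ Finset.subset_union_left
    rw [show (((unionGraph G F).induce G.verts).verts : Set ℕ) = (G.verts : Finset ℕ)
      from by rw [hverts]]
    exact Set.bijOn_id _
  · intro a ha b hb
    simp only [NatGraph.induce, unionGraph, id]
    constructor
    · intro h; exact ⟨Or.inl h, ha, hb⟩
    · rintro ⟨h | h, -, -⟩
      · exact h
      · exact absurd ha (Finset.disjoint_left.1 hdisj.symm (F.mem_of_adj a b h).1)

lemma le_unionGraph_right {G F : NatGraph} (hdisj : Disjoint G.verts F.verts) :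
    F.Le (unionGraph G F) := by
  refine ⟨F.verts, Finset.subset_union_right, id, ?_, ?_⟩
  · have hverts : ((unionGraph G F).induce F.verts).verts = F.verts :=
      induce_verts_eq _ Finset.subset_union_right
    rw [show (((unionGraph G F).induce F.verts).verts : Set ℕ) = (F.verts : Finset ℕ)
      from by rw [hverts]]
    exact Set.bijOn_id _
  · intro a ha b hb
    simp only [NatGraph.induce, unionGraph, id]
    constructor
    · intro h; exact ⟨Or.inr h, ha, hb⟩
    · rintro ⟨h | h, -, -⟩
      · exact absurd ha (Finset.disjoint_left.1 hdisj (G.mem_of_adj a b h).1)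
      · exact h

-- STATEMENT 6
theorem statement6 (P : Set NatGraph) (hP : IsAIH P) (hne : P ≠ Set.univ)
    (𝒢 : Set NatGraph) (hgen : Generates 𝒢 P) :
    Generates {G ∈ 𝒢 | Strict P G ∧ decP P G = decOf P} P := by
  obtain ⟨hprop, hher, hadd⟩ := hP
  apply Set.Subset.antisymm
  · rintro G ⟨Hh, hmem, hle⟩
    rw [← hgen]
    exact ⟨Hh, hmem.1, hle⟩
  · intro G hGP
    obtain ⟨Fs, hFs⟩ := exists_strict hprop hne
    have himne : (decP P '' {G | Strict P G}).Nonempty := ⟨decP P Fs, Fs, hFs, rfl⟩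
    obtain ⟨F₀, hF₀s, hF₀d⟩ := Nat.sInf_mem himne
    set N := G.verts.sup id + 1 with hN_def
    set F := shiftGraph F₀ N with hF_def
    have hiso := shift_iso F₀ N
    have hFP : F ∈ P := hprop.2.2 F₀ F ⟨_, hiso⟩ hF₀s.1
    have hF₀F : F₀.Le F := NatGraph.le_of_iso ⟨_, hiso⟩
    have hFstrict : Strict P F := strict_mono_le hher hF₀s hF₀F hFP
    have hdisj : Disjoint G.verts F.verts := by
      rw [Finset.disjoint_right]
      intro x hxF hxG
      obtain ⟨a, ha, rfl⟩ := Finset.mem_image.1 hxF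
      have h1 : a + N ≤ G.verts.sup id := Finset.le_sup (f := id) hxG
      omega
    set K := unionGraph G F with hK_def
    have hKP : K ∈ P := hadd G F K hGP hFP (unionGraph_isDisjUnion hdisj)
    have hGK : G.Le K := le_unionGraph_left hdisj
    have hFK : F.Le K := le_unionGraph_right hdisj
    rw [← hgen] at hKP
    obtain ⟨Hh, hH𝒢, hKH⟩ := hKP
    have hHP : Hh ∈ P := by
      rw [← hgen]
      exact ⟨Hh, hH𝒢, NatGraph.le_refl Hh⟩
    have hFH : F.Le Hh := NatGraph.le_trans hFK hKH
    have hHstrict : Strict P Hh := strict_mono_le hher hFstrict hFH hHP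
    have hF₀H : F₀.Le Hh := NatGraph.le_trans hF₀F hFH
    have hF₀d' : decP P F₀ = decOf P := hF₀d
    have h1 : decP P Hh ≤ decOf P := by
      rw [← hF₀d']
      exact decP_le_of_strict_le hher hF₀s hF₀H
    have h2 : decOf P ≤ decP P Hh := Nat.sInf_le ⟨Hh, hHstrict, rfl⟩
    exact ⟨Hh, ⟨hH𝒢, hHstrict, le_antisymm h1 h2⟩, NatGraph.le_trans hGK hKH⟩
end Aux
end
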